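/- arXiv:1804.05785 — 9 statements merged into one kernel-verified Lean document; each statement's English description precedes it below -/
import Mathlib

section
/- Fix e ∈ {1,…,T}, an integer l with −e ≤ l ≤ T−e−1, an integer s with 0 ≤ s < e, and a nonempty set C ⊆ {c ∈ ℕ : e+l < c ≤ T and s < c}. Assume parallel trends (PT) and no anticipation (NA). Then E[Y_{e+l} − Y_s | E = e] − E[Y_{e+l} − Y_s | E ∈ C] = CATT(e,l). (Core identity of Proposition 3: the population difference-in-differences contrast identifies the cohort-specific average treatment effect on the treated.) -/
open MeasureTheory Filter

noncomputable section

/-- Conditional expectation `E[Z | A] := E[Z·1_A] / P(A)` given an event `A`. -/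
def cexp {Ω : Type*} [MeasurableSpace Ω] (μ : Measure Ω) (Z : Ω → ℝ) (A : Set Ω) : ℝ :=
  (∫ ω in A, Z ω ∂μ) / (μ A).toReal

/-- Observed outcome `Y_t := Y∞_t + Σ_{e=1}^{T} (Yᵉ_t − Y∞_t)·1{E = e}`. -/
def obsY {Ω : Type*} (T : ℕ) (E : Ω → ℕ) (Ye : ℕ → ℕ → Ω → ℝ) (Yinf : ℕ → Ω → ℝ)
    (t : ℕ) (ω : Ω) : ℝ :=
  Yinf t ω + ∑ e ∈ Finset.Icc 1 T, (Ye e t ω - Yinf t ω) * (if E ω = e then 1 else 0)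

/-- Cohort-specific average treatment effect on the treated,
`CATT(e,l) := E[Yᵉ_{e+l} − Y∞_{e+l} | E = e]`. -/
def CATT {Ω : Type*} [MeasurableSpace Ω] (μ : Measure Ω) (E : Ω → ℕ)
    (Ye : ℕ → ℕ → Ω → ℝ) (Yinf : ℕ → Ω → ℝ) (e : ℕ) (l : ℤ) : ℝ :=
  cexp μ (fun ω => Ye e ((e : ℤ) + l).toNat ω - Yinf ((e : ℤ) + l).toNat ω) {ω | E ω = e}

/-- Parallel trends in baseline outcome. -/
def PT {Ω : Type*} [MeasurableSpace Ω] (μ : Measure Ω) (T : ℕ) (E : Ω → ℕ)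
    (Yinf : ℕ → Ω → ℝ) : Prop :=
  ∀ e ∈ Finset.Icc 1 T, ∀ s ≤ T, ∀ t ≤ T,
    cexp μ (fun ω => Yinf t ω - Yinf s ω) {ω | E ω = e}
      = ∫ ω, (Yinf t ω - Yinf s ω) ∂μ

/-- No anticipatory behavior. -/
def NA {Ω : Type*} [MeasurableSpace Ω] (μ : Measure Ω) (T : ℕ)
    (Ye : ℕ → ℕ → Ω → ℝ) (Yinf : ℕ → Ω → ℝ) : Prop :=
  ∀ e ∈ Finset.Icc 1 T, ∀ t < e, Ye e t =ᵐ[μ] Yinf t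

lemma obsY_eq_Ye {Ω : Type*} (T : ℕ) (E : Ω → ℕ) (Ye : ℕ → ℕ → Ω → ℝ)
    (Yinf : ℕ → Ω → ℝ) (t : ℕ) (ω : Ω) (h : E ω ∈ Finset.Icc 1 T) :
    obsY T E Ye Yinf t ω = Ye (E ω) t ω := by
  unfold obsY
  rw [Finset.sum_eq_single (E ω)]
  · simp
  · intro b _ hb
    simp [Ne.symm hb]
  · intro h'; exact absurd h h'

/-- Proposition 3 (identification): the population difference-in-differences contrast
identifies `CATT(e,l)`. -/
theorem did_identifies_catt
    {Ω : Type*} [MeasurableSpace Ω] (μ : Measure Ω) [IsProbabilityMeasure μ]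
    (T : ℕ) (hT : 1 ≤ T)
    (E : Ω → ℕ) (hE : Measurable E)
    (hsupp : μ {ω | 1 ≤ E ω ∧ E ω ≤ T} = 1)
    (hpos : ∀ e ∈ Finset.Icc 1 T, 0 < μ {ω | E ω = e})
    (Ye : ℕ → ℕ → Ω → ℝ) (Yinf : ℕ → Ω → ℝ)
    (hL2e : ∀ e ∈ Finset.Icc 1 T, ∀ t ≤ T, MemLp (Ye e t) 2 μ)
    (hL2inf : ∀ t ≤ T, MemLp (Yinf t) 2 μ)
    (hPT : PT μ T E Yinf) (hNA : NA μ T Ye Yinf)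
    (e : ℕ) (he : e ∈ Finset.Icc 1 T)
    (l : ℤ) (hl1 : -(e : ℤ) ≤ l) (hl2 : l ≤ (T : ℤ) - e - 1)
    (s : ℕ) (hs : s < e)
    (C : Set ℕ) (hCne : C.Nonempty)
    (hCsub : C ⊆ {c | (e : ℤ) + l < (c : ℤ) ∧ c ≤ T ∧ s < c}) :
    cexp μ (fun ω => obsY T E Ye Yinf ((e : ℤ) + l).toNat ω - obsY T E Ye Yinf s ω)
        {ω | E ω = e}
      - cexp μ (fun ω => obsY T E Ye Yinf ((e : ℤ) + l).toNat ω - obsY T E Ye Yinf s ω)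
        {ω | E ω ∈ C}
      = CATT μ E Ye Yinf e l := by
  classical
  obtain ⟨he1, he2⟩ := Finset.mem_Icc.mp he
  set t : ℕ := ((e : ℤ) + l).toNat with ht_def
  have hel : (0:ℤ) ≤ (e:ℤ) + l := by omega
  have ht_cast : (t : ℤ) = (e : ℤ) + l := Int.toNat_of_nonneg hel
  have htT : t ≤ T := by omega
  have hsT : s ≤ T := by omega
  have hmE : MeasurableSet {ω | E ω = e} := hE (measurableSet_singleton e)
  have hmC : MeasurableSet {ω | E ω ∈ C} := hE ((Set.to_countable C).measurableSet)
  set m := ∫ ω, (Yinf t ω - Yinf s ω) ∂μ with hm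
  have hint_g : Integrable (fun ω => Yinf t ω - Yinf s ω) μ :=
    ((hL2inf t htT).integrable one_le_two).sub ((hL2inf s hsT).integrable one_le_two)
  have hint_d : Integrable (fun ω => Ye e t ω - Yinf t ω) μ :=
    ((hL2e e he t htT).integrable one_le_two).sub ((hL2inf t htT).integrable one_le_two)
  have hPT' : ∀ c ∈ Finset.Icc 1 T,
      ∫ ω in {ω | E ω = c}, (Yinf t ω - Yinf s ω) ∂μ = m * (μ {ω | E ω = c}).toReal := by
    intro c hc
    have h := hPT c hc s hsT t htT
    have hne : (μ {ω | E ω = c}).toReal ≠ 0 :=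
      (ENNReal.toReal_pos (hpos c hc).ne' (measure_lt_top μ _).ne).ne'
    rw [cexp, div_eq_iff hne] at h
    exact h
  -- Step A : on {E = e}
  have hA : ∫ ω in {ω | E ω = e}, (obsY T E Ye Yinf t ω - obsY T E Ye Yinf s ω) ∂μ
      = ∫ ω in {ω | E ω = e}, ((Ye e t ω - Yinf t ω) + (Yinf t ω - Yinf s ω)) ∂μ := by
    apply setIntegral_congr_ae hmE
    filter_upwards [hNA e he s hs] with ω hω hωe
    have hmem : E ω ∈ Finset.Icc 1 T := by rw [hωe]; exact he
    rw [obsY_eq_Ye T E Ye Yinf t ω hmem, obsY_eq_Ye T E Ye Yinf s ω hmem, hωe, hω]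
    ring
  have hPe : (μ {ω | E ω = e}).toReal ≠ 0 :=
    (ENNReal.toReal_pos (hpos e he).ne' (measure_lt_top μ _).ne).ne'
  have hEq1 : cexp μ (fun ω => obsY T E Ye Yinf t ω - obsY T E Ye Yinf s ω) {ω | E ω = e}
      = CATT μ E Ye Yinf e l + m := by
    rw [cexp, hA, integral_add hint_d.integrableOn hint_g.integrableOn, hPT' e he,
      CATT, cexp]
    field_simp
    rfl
  -- a.e. no-anticipation, uniform over cohorts
  have hNAt : ∀ᵐ ω ∂μ, ∀ c : ℕ, 1 ≤ c → c ≤ T → t < c → Ye c t ω = Yinf t ω := by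
    rw [ae_all_iff]
    intro c
    by_cases h : 1 ≤ c ∧ c ≤ T ∧ t < c
    · filter_upwards [hNA c (Finset.mem_Icc.mpr ⟨h.1, h.2.1⟩) t h.2.2] with ω hω
      intro _ _ _; exact hω
    · filter_upwards with ω h1 h2 h3; exact absurd ⟨h1, h2, h3⟩ h
  have hNAs : ∀ᵐ ω ∂μ, ∀ c : ℕ, 1 ≤ c → c ≤ T → s < c → Ye c s ω = Yinf s ω := by
    rw [ae_all_iff]
    intro c
    by_cases h : 1 ≤ c ∧ c ≤ T ∧ s < c
    · filter_upwards [hNA c (Finset.mem_Icc.mpr ⟨h.1, h.2.1⟩) s h.2.2] with ω hω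
      intro _ _ _; exact hω
    · filter_upwards with ω h1 h2 h3; exact absurd ⟨h1, h2, h3⟩ h
  -- Step B : on {E ∈ C}
  have hB : ∫ ω in {ω | E ω ∈ C}, (obsY T E Ye Yinf t ω - obsY T E Ye Yinf s ω) ∂μ
      = ∫ ω in {ω | E ω ∈ C}, (Yinf t ω - Yinf s ω) ∂μ := by
    apply setIntegral_congr_ae hmC
    filter_upwards [hNAt, hNAs] with ω h1 h2 hωC
    obtain ⟨hlt, hle, hsc⟩ := hCsub hωC
    have h1c : 1 ≤ E ω := by omega
    have htc : t < E ω := by omega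
    have hmem : E ω ∈ Finset.Icc 1 T := Finset.mem_Icc.mpr ⟨h1c, hle⟩
    rw [obsY_eq_Ye T E Ye Yinf t ω hmem, obsY_eq_Ye T E Ye Yinf s ω hmem,
      h1 (E ω) h1c hle htc, h2 (E ω) h1c hle hsc]
  -- decompose {E ∈ C} as a finite disjoint union
  set F : Finset ℕ := (Finset.Icc 1 T).filter (· ∈ C) with hF
  have hCF : {ω | E ω ∈ C} = ⋃ c ∈ F, {ω | E ω = c} := by
    ext ω
    simp only [Set.mem_setOf_eq, Set.mem_iUnion, exists_prop, hF, Finset.mem_filter,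
      Finset.mem_Icc]
    constructor
    · intro h
      obtain ⟨hlt, hle, hsc⟩ := hCsub h
      exact ⟨E ω, ⟨⟨by omega, hle⟩, h⟩, rfl⟩
    · rintro ⟨c, ⟨_, hcC⟩, hc⟩; rw [hc]; exact hcC
  have hdisj : (↑F : Set ℕ).Pairwise (Function.onFun Disjoint fun c => {ω | E ω = c}) := by
    intro a _ b _ hab
    simp only [Function.onFun, Set.disjoint_left, Set.mem_setOf_eq]
    intro ω ha hb
    exact hab (ha.symm.trans hb)
  have hmeasF : ∀ c ∈ F, MeasurableSet {ω | E ω = c} :=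
    fun c _ => hE (measurableSet_singleton c)
  have hμC : μ {ω | E ω ∈ C} = ∑ c ∈ F, μ {ω | E ω = c} := by
    rw [hCF, measure_biUnion_finset hdisj hmeasF]
  have hIC : ∫ ω in {ω | E ω ∈ C}, (Yinf t ω - Yinf s ω) ∂μ
      = m * (μ {ω | E ω ∈ C}).toReal := by
    rw [hCF, integral_biUnion_finset F hmeasF hdisj (fun c _ => hint_g.integrableOn), ← hCF]
    calc ∑ c ∈ F, ∫ ω in {ω | E ω = c}, (Yinf t ω - Yinf s ω) ∂μ
        = ∑ c ∈ F, m * (μ {ω | E ω = c}).toReal :=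
          Finset.sum_congr rfl fun c hc => hPT' c (Finset.mem_filter.mp hc).1
      _ = m * ∑ c ∈ F, (μ {ω | E ω = c}).toReal := by rw [Finset.mul_sum]
      _ = m * (μ {ω | E ω ∈ C}).toReal := by
          rw [hμC, ENNReal.toReal_sum (fun c _ => (measure_lt_top μ _).ne)]
  have hPCne : (μ {ω | E ω ∈ C}).toReal ≠ 0 := by
    obtain ⟨c0, hc0⟩ := hCne
    obtain ⟨hlt0, hle0, hsc0⟩ := hCsub hc0
    have hc0' : c0 ∈ Finset.Icc 1 T := Finset.mem_Icc.mpr ⟨by omega, hle0⟩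
    have hlt : 0 < μ {ω | E ω ∈ C} :=
      lt_of_lt_of_le (hpos c0 hc0')
        (measure_mono fun ω hω => by
          simp only [Set.mem_setOf_eq] at hω ⊢; rw [hω]; exact hc0)
    exact (ENNReal.toReal_pos hlt.ne' (measure_lt_top μ _).ne).ne'
  have hEq2 : cexp μ (fun ω => obsY T E Ye Yinf t ω - obsY T E Ye Yinf s ω) {ω | E ω ∈ C}
      = m := by
    rw [cexp, hB, hIC, mul_div_assoc, div_self hPCne, mul_one]
  rw [hEq1, hEq2]
  ring

end
end

section
/- Fix e ∈ {1,…,T}, an integer l with −e ≤ l ≤ T−e−1, an integer s with 0 ≤ s < e, and a nonempty set C ⊆ {c ∈ ℕ : e+l < c ≤ T and s < c} with P(E ∈ C) > 0. Assume parallel trends (PT) and no anticipation (NA). Then the sample DID estimator δ̂^{s,C}_{e,l}(n) converges almost surely to CATT(e,l) as n → ∞. (Consistency part of Proposition 3.) -/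
open MeasureTheory Filter

noncomputable section

/-- Number of indices `i < n` whose event time lies in `A`. -/
def sampleCount {Ω' : Type*} (Eseq : ℕ → Ω' → ℕ) (A : Finset ℕ) (n : ℕ) (ω' : Ω') : ℕ :=
  ((Finset.range n).filter (fun i => Eseq i ω' ∈ A)).card

/-- The sample difference-in-differences estimator `δ̂^{s,C}_{e,l}(n)`
(Lean's convention `x/0 = 0` handles vanishing denominators). -/
def sampleDID {Ω' : Type*} (Eseq : ℕ → Ω' → ℕ) (Yseq : ℕ → ℕ → Ω' → ℝ)
    (e : ℕ) (l : ℤ) (s : ℕ) (C : Finset ℕ) (n : ℕ) (ω' : Ω') : ℝ :=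
  (∑ i ∈ (Finset.range n).filter (fun i => Eseq i ω' = e),
      (Yseq i ((e : ℤ) + l).toNat ω' - Yseq i s ω'))
      / (sampleCount Eseq {e} n ω' : ℝ)
    - (∑ i ∈ (Finset.range n).filter (fun i => Eseq i ω' ∈ C),
        (Yseq i ((e : ℤ) + l).toNat ω' - Yseq i s ω'))
      / (sampleCount Eseq C n ω' : ℝ)

/-- The sequence `((E_i, (Y_{i,t})_t))_i` is i.i.d. with each term distributed as
`(E, (Y_t)_t)`. -/
def IIDSample {Ω Ω' : Type*} [MeasurableSpace Ω] [MeasurableSpace Ω']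
    (μ : Measure Ω) (μ' : Measure Ω') (T : ℕ) (E : Ω → ℕ)
    (Ye : ℕ → ℕ → Ω → ℝ) (Yinf : ℕ → Ω → ℝ)
    (Eseq : ℕ → Ω' → ℕ) (Yseq : ℕ → ℕ → Ω' → ℝ) : Prop :=
  ProbabilityTheory.iIndepFun
      (fun i ω' => ((Eseq i ω', fun t : Fin (T + 1) => Yseq i t ω') :
        ℕ × (Fin (T + 1) → ℝ))) μ'
    ∧ ∀ i : ℕ,
        Measure.map (fun ω' => ((Eseq i ω', fun t : Fin (T + 1) => Yseq i t ω') :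
          ℕ × (Fin (T + 1) → ℝ))) μ'
        = Measure.map (fun ω => ((E ω, fun t : Fin (T + 1) => obsY T E Ye Yinf t ω) :
          ℕ × (Fin (T + 1) → ℝ))) μ

open ProbabilityTheory in
/-- SLLN for a composed i.i.d. sequence. -/
lemma slln_comp {Ω Ω' : Type*} [MeasurableSpace Ω] [MeasurableSpace Ω']
    (μ : Measure Ω) [IsProbabilityMeasure μ] (μ' : Measure Ω') [IsProbabilityMeasure μ']
    {α : Type*} [MeasurableSpace α]
    (W : ℕ → Ω' → α) (Z : Ω → α)
    (hindep : iIndepFun W μ')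
    (hmap : ∀ i, Measure.map (W i) μ' = Measure.map Z μ)
    (hZ : AEMeasurable Z μ)
    (f : α → ℝ) (hf : Measurable f) (hint : Integrable (fun ω => f (Z ω)) μ) :
    ∀ᵐ ω' ∂μ', Tendsto (fun n => (∑ i ∈ Finset.range n, f (W i ω')) / n) atTop
      (nhds (∫ ω, f (Z ω) ∂μ)) := by
  have hPZ : IsProbabilityMeasure (Measure.map Z μ) := Measure.isProbabilityMeasure_map hZ
  have hWa : ∀ i, AEMeasurable (W i) μ' := by
    intro i
    by_contra h
    have h0 := Measure.map_of_not_aemeasurable h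
    rw [hmap i] at h0
    exact IsProbabilityMeasure.ne_zero _ h0
  have idWZ : ∀ i, IdentDistrib (W i) Z μ' μ := fun i => ⟨hWa i, hZ, hmap i⟩
  have hX : ∀ i, IdentDistrib (fun ω' => f (W i ω')) (fun ω' => f (W 0 ω')) μ' μ' :=
    fun i => ((idWZ i).trans (idWZ 0).symm).comp hf
  have hint0 : Integrable (fun ω' => f (W 0 ω')) μ' :=
    ((idWZ 0).comp hf).integrable_iff.mpr hint
  have hpair : Pairwise (Function.onFun (IndepFun · · μ') fun i ω' => f (W i ω')) := by
    intro i j hij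
    exact (hindep.indepFun hij).comp hf hf
  have h := strong_law_ae_real (fun i ω' => f (W i ω')) hint0 hpair hX
  have heq : ∫ ω', f (W 0 ω') ∂μ' = ∫ ω, f (Z ω) ∂μ := ((idWZ 0).comp hf).integral_eq
  rw [heq] at h
  exact h

/-- Convergence of a ratio of averaged sums. -/
lemma tendsto_ratio {u v : ℕ → ℝ} {a b : ℝ} (hb : b ≠ 0)
    (hu : Tendsto (fun n => u n / n) atTop (nhds a))
    (hv : Tendsto (fun n => v n / n) atTop (nhds b)) :
    Tendsto (fun n => u n / v n) atTop (nhds (a / b)) := by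
  refine Tendsto.congr' ?_ (hu.div hv hb)
  filter_upwards [eventually_ge_atTop 1] with n hn
  have hn0 : (n : ℝ) ≠ 0 := Nat.cast_ne_zero.mpr (by omega)
  rcases eq_or_ne (v n) 0 with h | h
  · simp [h]
  · simp only [Pi.div_apply]; field_simp

/-- Proposition 3 (consistency): the sample DID estimator converges almost surely
to `CATT(e,l)`. -/
theorem sampleDID_consistent
    {Ω Ω' : Type*} [MeasurableSpace Ω] [MeasurableSpace Ω']
    (μ : Measure Ω) [IsProbabilityMeasure μ]
    (μ' : Measure Ω') [IsProbabilityMeasure μ']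
    (T : ℕ) (hT : 1 ≤ T)
    (E : Ω → ℕ) (hE : Measurable E)
    (hsupp : μ {ω | 1 ≤ E ω ∧ E ω ≤ T} = 1)
    (hpos : ∀ e ∈ Finset.Icc 1 T, 0 < μ {ω | E ω = e})
    (Ye : ℕ → ℕ → Ω → ℝ) (Yinf : ℕ → Ω → ℝ)
    (hL2e : ∀ e ∈ Finset.Icc 1 T, ∀ t ≤ T, MemLp (Ye e t) 2 μ)
    (hL2inf : ∀ t ≤ T, MemLp (Yinf t) 2 μ)
    (hPT : PT μ T E Yinf) (hNA : NA μ T Ye Yinf)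
    (Eseq : ℕ → Ω' → ℕ) (Yseq : ℕ → ℕ → Ω' → ℝ)
    (hiid : IIDSample μ μ' T E Ye Yinf Eseq Yseq)
    (e : ℕ) (he : e ∈ Finset.Icc 1 T)
    (l : ℤ) (hl1 : -(e : ℤ) ≤ l) (hl2 : l ≤ (T : ℤ) - e - 1)
    (s : ℕ) (hs : s < e)
    (C : Finset ℕ) (hCne : C.Nonempty)
    (hCsub : ∀ c ∈ C, (e : ℤ) + l < (c : ℤ) ∧ c ≤ T ∧ s < c)
    (hCpos : 0 < μ {ω | E ω ∈ C}) :
    ∀ᵐ ω' ∂μ', Tendsto (fun n => sampleDID Eseq Yseq e l s C n ω') atTop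
      (nhds (CATT μ E Ye Yinf e l)) := by
  classical
  obtain ⟨hiidIndep, hiidMap⟩ := hiid
  obtain ⟨he1, heT⟩ := Finset.mem_Icc.mp he
  set t1 : ℕ := ((e : ℤ) + l).toNat with ht1def
  have ht1T : t1 ≤ T := by omega
  have hsT : s ≤ T := by omega
  have ht1F : t1 < T + 1 := by omega
  have hsF : s < T + 1 := by omega
  let t1' : Fin (T + 1) := ⟨t1, ht1F⟩
  let s' : Fin (T + 1) := ⟨s, hsF⟩
  -- integrability on the population space
  have hIntInf : ∀ t, t ≤ T → Integrable (Yinf t) μ :=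
    fun t ht => (hL2inf t ht).integrable one_le_two
  have hIntYe : ∀ c ∈ Finset.Icc 1 T, ∀ t, t ≤ T → Integrable (Ye c t) μ :=
    fun c hc t ht => (hL2e c hc t ht).integrable one_le_two
  have hIndMeas : ∀ (P : ℕ → Prop) (_ : DecidablePred P),
      Measurable (fun ω => if P (E ω) then (1 : ℝ) else 0) := by
    intro P _
    exact Measurable.ite (hE MeasurableSet.of_discrete) measurable_const measurable_const
  have hIndInt : ∀ (P : ℕ → Prop) (_ : DecidablePred P) (h : Ω → ℝ), Integrable h μ →
      Integrable (fun ω => h ω * if P (E ω) then (1 : ℝ) else 0) μ := by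
    intro P hdec h hh
    have h1 := Integrable.bdd_mul hh ((hIndMeas P hdec).aestronglyMeasurable)
      (c := 1) (ae_of_all _ fun ω => by dsimp; split_ifs <;> simp)
    have h2 : (fun ω => h ω * if P (E ω) then (1 : ℝ) else 0)
        = fun ω => (if P (E ω) then (1 : ℝ) else 0) * h ω := by funext ω; ring
    rw [h2]; exact h1
  have hIndInt' : ∀ (P : ℕ → Prop) (_ : DecidablePred P),
      Integrable (fun ω => if P (E ω) then (1 : ℝ) else 0) μ := by
    intro P hdec
    have := hIndInt P hdec (fun _ => 1) (integrable_const 1)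
    simpa using this
  have hIntObs : ∀ t, t ≤ T → Integrable (obsY T E Ye Yinf t) μ := by
    intro t ht
    unfold obsY
    refine (hIntInf t ht).add (integrable_finset_sum _ fun c hc => ?_)
    exact hIndInt (· = c) _ _ ((hIntYe c hc t ht).sub (hIntInf t ht))
  have hΔint : Integrable (fun ω => obsY T E Ye Yinf t1 ω - obsY T E Ye Yinf s ω) μ :=
    (hIntObs t1 ht1T).sub (hIntObs s hsT)
  -- a.e. measurability of the population pair
  have hZae : AEMeasurable
      (fun ω => ((E ω, fun t : Fin (T + 1) => obsY T E Ye Yinf t ω) :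
        ℕ × (Fin (T + 1) → ℝ))) μ := by
    have h1 : ∀ t : Fin (T + 1), AEMeasurable (fun ω => obsY T E Ye Yinf t ω) μ :=
      fun t => (hIntObs t (Nat.lt_succ_iff.mp t.2)).aemeasurable
    choose g hgm hge using h1
    refine ⟨fun ω => (E ω, fun t => g t ω),
      hE.prodMk (measurable_pi_lambda _ hgm), ?_⟩
    have hall : ∀ᵐ ω ∂μ, ∀ t : Fin (T + 1), obsY T E Ye Yinf t ω = g t ω :=
      ae_all_iff.mpr hge
    filter_upwards [hall] with ω hω
    exact Prod.ext rfl (funext fun t => hω t)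
  -- measurability of the four test functions
  have hfst : ∀ (P : ℕ → Prop) (_ : DecidablePred P),
      Measurable (fun p : ℕ × (Fin (T + 1) → ℝ) => if P p.1 then (1 : ℝ) else 0) := by
    intro P _
    exact Measurable.ite (measurable_fst MeasurableSet.of_discrete)
      measurable_const measurable_const
  have hsnd : Measurable (fun p : ℕ × (Fin (T + 1) → ℝ) => p.2 t1' - p.2 s') :=
    ((measurable_pi_apply t1').comp measurable_snd).sub
      ((measurable_pi_apply s').comp measurable_snd)
  -- the four strong laws
  have A1 : ∀ᵐ ω' ∂μ', Tendsto (fun n => (∑ i ∈ Finset.range n,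
        (Yseq i t1 ω' - Yseq i s ω') * (if Eseq i ω' = e then (1 : ℝ) else 0)) / n) atTop
      (nhds (∫ ω, (obsY T E Ye Yinf t1 ω - obsY T E Ye Yinf s ω) *
        (if E ω = e then (1 : ℝ) else 0) ∂μ)) :=
    slln_comp μ μ' _ _ hiidIndep hiidMap hZae
      (fun p => (p.2 t1' - p.2 s') * (if p.1 = e then 1 else 0))
      (hsnd.mul (hfst (· = e) _)) (hIndInt (· = e) _ _ hΔint)
  have B1 : ∀ᵐ ω' ∂μ', Tendsto (fun n => (∑ i ∈ Finset.range n,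
        (if Eseq i ω' = e then (1 : ℝ) else 0)) / n) atTop
      (nhds (∫ ω, (if E ω = e then (1 : ℝ) else 0) ∂μ)) :=
    slln_comp μ μ' _ _ hiidIndep hiidMap hZae
      (fun p => if p.1 = e then 1 else 0)
      (hfst (· = e) _) (hIndInt' (· = e) _)
  have A2 : ∀ᵐ ω' ∂μ', Tendsto (fun n => (∑ i ∈ Finset.range n,
        (Yseq i t1 ω' - Yseq i s ω') * (if Eseq i ω' ∈ C then (1 : ℝ) else 0)) / n) atTop
      (nhds (∫ ω, (obsY T E Ye Yinf t1 ω - obsY T E Ye Yinf s ω) *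
        (if E ω ∈ C then (1 : ℝ) else 0) ∂μ)) :=
    slln_comp μ μ' _ _ hiidIndep hiidMap hZae
      (fun p => (p.2 t1' - p.2 s') * (if p.1 ∈ C then 1 else 0))
      (hsnd.mul (hfst (· ∈ C) _)) (hIndInt (· ∈ C) _ _ hΔint)
  have B2 : ∀ᵐ ω' ∂μ', Tendsto (fun n => (∑ i ∈ Finset.range n,
        (if Eseq i ω' ∈ C then (1 : ℝ) else 0)) / n) atTop
      (nhds (∫ ω, (if E ω ∈ C then (1 : ℝ) else 0) ∂μ)) :=
    slln_comp μ μ' _ _ hiidIndep hiidMap hZae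
      (fun p => if p.1 ∈ C then 1 else 0)
      (hfst (· ∈ C) _) (hIndInt' (· ∈ C) _)
  -- identify the limiting integrals
  have hSe : MeasurableSet {ω | E ω = e} := hE (measurableSet_singleton e)
  have hSC : MeasurableSet {ω | E ω ∈ C} := hE MeasurableSet.of_discrete
  have hPmeas : ∀ (P : ℕ → Prop), MeasurableSet {ω | P (E ω)} :=
    fun P => hE MeasurableSet.of_discrete
  have hindicator : ∀ (P : ℕ → Prop) (_ : DecidablePred P) (h : Ω → ℝ),
      ∫ ω, h ω * (if P (E ω) then (1 : ℝ) else 0) ∂μ = ∫ ω in {ω | P (E ω)}, h ω ∂μ := by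
    intro P hdec h
    rw [← integral_indicator (hPmeas P)]
    congr 1
    funext ω
    by_cases hω : P (E ω) <;> simp [Set.indicator_apply, hω]
  have hindicator1 : ∀ (P : ℕ → Prop) (_ : DecidablePred P),
      ∫ ω, (if P (E ω) then (1 : ℝ) else 0) ∂μ = (μ {ω | P (E ω)}).toReal := by
    intro P hdec
    have h1 : (fun ω => if P (E ω) then (1 : ℝ) else 0)
        = Set.indicator {ω | P (E ω)} (fun _ => (1 : ℝ)) := by
      funext ω
      by_cases hω : P (E ω) <;> simp [Set.indicator_apply, hω]
    rw [h1, integral_indicator (hPmeas P), setIntegral_const, smul_eq_mul, mul_one, measureReal_def]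
  have hPe : (0 : ℝ) < (μ {ω | E ω = e}).toReal :=
    ENNReal.toReal_pos (hpos e he).ne' (measure_ne_top μ _)
  have hPC : (0 : ℝ) < (μ {ω | E ω ∈ C}).toReal :=
    ENNReal.toReal_pos hCpos.ne' (measure_ne_top μ _)
  -- cohort representation of the observed outcome
  have hobs : ∀ c, 1 ≤ c → c ≤ T → ∀ t ω, E ω = c → obsY T E Ye Yinf t ω = Ye c t ω := by
    intro c hc1 hcT t ω hω
    unfold obsY
    rw [Finset.sum_eq_single c (fun b _ hbc => by simp [hω, Ne.symm hbc])
      (fun hc => absurd (Finset.mem_Icc.mpr ⟨hc1, hcT⟩) hc)]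
    simp [hω]
  set Iinf : ℝ := ∫ ω, (Yinf t1 ω - Yinf s ω) ∂μ with hIinfdef
  -- treated cohort
  have hcohorte : ∫ ω in {ω | E ω = e}, (obsY T E Ye Yinf t1 ω - obsY T E Ye Yinf s ω) ∂μ
      = (∫ ω in {ω | E ω = e}, (Ye e t1 ω - Yinf t1 ω) ∂μ)
        + ∫ ω in {ω | E ω = e}, (Yinf t1 ω - Yinf s ω) ∂μ := by
    have h1 : ∫ ω in {ω | E ω = e}, (obsY T E Ye Yinf t1 ω - obsY T E Ye Yinf s ω) ∂μ
        = ∫ ω in {ω | E ω = e}, ((Ye e t1 ω - Yinf t1 ω) + (Yinf t1 ω - Yinf s ω)) ∂μ := by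
      refine setIntegral_congr_ae hSe ?_
      filter_upwards [hNA e he s hs] with ω hYs hmem
      rw [hobs e he1 heT t1 ω hmem, hobs e he1 heT s ω hmem, hYs]
      ring
    have i1 : IntegrableOn (fun ω => Ye e t1 ω - Yinf t1 ω) {ω | E ω = e} μ :=
      ((hIntYe e he t1 ht1T).sub (hIntInf t1 ht1T)).integrableOn
    have i2 : IntegrableOn (fun ω => Yinf t1 ω - Yinf s ω) {ω | E ω = e} μ :=
      ((hIntInf t1 ht1T).sub (hIntInf s hsT)).integrableOn
    rw [h1, integral_add i1 i2]
  have hPTe : (∫ ω in {ω | E ω = e}, (Yinf t1 ω - Yinf s ω) ∂μ)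
      / (μ {ω | E ω = e}).toReal = Iinf := hPT e he s hsT t1 ht1T
  -- control cohorts
  have hSCun : {ω | E ω ∈ C} = ⋃ c ∈ C, {ω | E ω = c} := by
    ext ω; simp
  have hdisj : (↑C : Set ℕ).Pairwise (Function.onFun Disjoint fun c => {ω | E ω = c}) := by
    intro a _ b _ hab
    refine Set.disjoint_left.mpr fun ω h1 h2 => hab ?_
    rw [Set.mem_setOf_eq] at h1 h2
    rw [← h1, ← h2]
  have hintC : ∫ ω in {ω | E ω ∈ C}, (obsY T E Ye Yinf t1 ω - obsY T E Ye Yinf s ω) ∂μ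
      = ∑ c ∈ C, ∫ ω in {ω | E ω = c},
          (obsY T E Ye Yinf t1 ω - obsY T E Ye Yinf s ω) ∂μ := by
    rw [hSCun]
    exact integral_biUnion_finset C (fun c _ => hE (measurableSet_singleton c)) hdisj
      (fun c _ => hΔint.integrableOn)
  have hC1 : ∀ c ∈ C, ∫ ω in {ω | E ω = c},
      (obsY T E Ye Yinf t1 ω - obsY T E Ye Yinf s ω) ∂μ
      = Iinf * (μ {ω | E ω = c}).toReal := by
    intro c hc
    obtain ⟨hcl, hcT2, hcs⟩ := hCsub c hc
    have hc1 : 1 ≤ c := by omega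
    have hcI : c ∈ Finset.Icc 1 T := Finset.mem_Icc.mpr ⟨hc1, hcT2⟩
    have ht1c : t1 < c := by omega
    have h1 : ∫ ω in {ω | E ω = c}, (obsY T E Ye Yinf t1 ω - obsY T E Ye Yinf s ω) ∂μ
        = ∫ ω in {ω | E ω = c}, (Yinf t1 ω - Yinf s ω) ∂μ := by
      refine setIntegral_congr_ae (hE (measurableSet_singleton c)) ?_
      filter_upwards [hNA c hcI t1 ht1c, hNA c hcI s hcs] with ω ha hb hmem
      rw [hobs c hc1 hcT2 t1 ω hmem, hobs c hc1 hcT2 s ω hmem, ha, hb]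
    have h2 : (∫ ω in {ω | E ω = c}, (Yinf t1 ω - Yinf s ω) ∂μ)
        / (μ {ω | E ω = c}).toReal = Iinf := hPT c hcI s hsT t1 ht1T
    have hpc : (μ {ω | E ω = c}).toReal ≠ 0 :=
      (ENNReal.toReal_pos (hpos c hcI).ne' (measure_ne_top μ _)).ne'
    rw [div_eq_iff hpc] at h2
    rw [h1, h2]
  have hmeasC : (μ {ω | E ω ∈ C}).toReal = ∑ c ∈ C, (μ {ω | E ω = c}).toReal := by
    rw [hSCun, measure_biUnion_finset hdisj (fun c _ => hE (measurableSet_singleton c)),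
      ENNReal.toReal_sum (fun c _ => measure_ne_top μ _)]
  -- the limit value
  have hvalue : (∫ ω, (obsY T E Ye Yinf t1 ω - obsY T E Ye Yinf s ω) *
          (if E ω = e then (1 : ℝ) else 0) ∂μ)
        / (∫ ω, (if E ω = e then (1 : ℝ) else 0) ∂μ)
      - (∫ ω, (obsY T E Ye Yinf t1 ω - obsY T E Ye Yinf s ω) *
          (if E ω ∈ C then (1 : ℝ) else 0) ∂μ)
        / (∫ ω, (if E ω ∈ C then (1 : ℝ) else 0) ∂μ)
      = CATT μ E Ye Yinf e l := by
    rw [hindicator (· = e) _ _, hindicator1 (· = e) _,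
      hindicator (· ∈ C) _ _, hindicator1 (· ∈ C) _]
    have hCterm : (∫ ω in {ω | E ω ∈ C},
        (obsY T E Ye Yinf t1 ω - obsY T E Ye Yinf s ω) ∂μ)
        / (μ {ω | E ω ∈ C}).toReal = Iinf := by
      rw [hintC, Finset.sum_congr rfl hC1, ← Finset.mul_sum, ← hmeasC,
        mul_div_assoc, div_self hPC.ne', mul_one]
    rw [hCterm, hcohorte, add_div, hPTe]
    unfold CATT cexp
    rw [← ht1def]
    ring
  -- combine
  filter_upwards [A1, B1, A2, B2] with ω' hA1 hB1 hA2 hB2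
  have hsum : ∀ (P : ℕ → Prop) (_ : DecidablePred P) (n : ℕ),
      (∑ i ∈ (Finset.range n).filter (fun i => P (Eseq i ω')),
        (Yseq i t1 ω' - Yseq i s ω'))
      = ∑ i ∈ Finset.range n,
          (Yseq i t1 ω' - Yseq i s ω') * (if P (Eseq i ω') then (1 : ℝ) else 0) := by
    intro P _ n
    rw [Finset.sum_filter]
    exact Finset.sum_congr rfl fun i _ => by split_ifs <;> simp
  have hcount : ∀ (A : Finset ℕ) (n : ℕ),
      ((sampleCount Eseq A n ω' : ℕ) : ℝ)
      = ∑ i ∈ Finset.range n, (if Eseq i ω' ∈ A then (1 : ℝ) else 0) := by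
    intro A n
    unfold sampleCount
    rw [Finset.card_filter]
    push_cast
    rfl
  have hrw : ∀ n, sampleDID Eseq Yseq e l s C n ω'
      = (∑ i ∈ Finset.range n,
          (Yseq i t1 ω' - Yseq i s ω') * (if Eseq i ω' = e then (1 : ℝ) else 0))
        / (∑ i ∈ Finset.range n, (if Eseq i ω' = e then (1 : ℝ) else 0))
      - (∑ i ∈ Finset.range n,
          (Yseq i t1 ω' - Yseq i s ω') * (if Eseq i ω' ∈ C then (1 : ℝ) else 0))
        / (∑ i ∈ Finset.range n, (if Eseq i ω' ∈ C then (1 : ℝ) else 0)) := by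
    intro n
    have hsum1 : (∑ i ∈ (Finset.range n).filter (fun i => Eseq i ω' = e),
          (Yseq i t1 ω' - Yseq i s ω'))
        = ∑ i ∈ Finset.range n,
            (Yseq i t1 ω' - Yseq i s ω') * (if Eseq i ω' = e then (1 : ℝ) else 0) := by
      rw [Finset.sum_filter]
      exact Finset.sum_congr rfl fun i _ => by split_ifs <;> simp
    have hsum2 : (∑ i ∈ (Finset.range n).filter (fun i => Eseq i ω' ∈ C),
          (Yseq i t1 ω' - Yseq i s ω'))
        = ∑ i ∈ Finset.range n,
            (Yseq i t1 ω' - Yseq i s ω') * (if Eseq i ω' ∈ C then (1 : ℝ) else 0) := by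
      rw [Finset.sum_filter]
      exact Finset.sum_congr rfl fun i _ => by split_ifs <;> simp
    unfold sampleDID
    rw [← ht1def, hcount, hcount, hsum1, hsum2]
    simp only [Finset.mem_singleton]
  have hIh1 : (∫ ω, (if E ω = e then (1 : ℝ) else 0) ∂μ) ≠ 0 := by
    rw [hindicator1 (· = e) _]
    exact hPe.ne'
  have hIh2 : (∫ ω, (if E ω ∈ C then (1 : ℝ) else 0) ∂μ) ≠ 0 := by
    rw [hindicator1 (· ∈ C) _]
    exact hPC.ne'
  have htot := (tendsto_ratio hIh1 hA1 hB1).sub (tendsto_ratio hIh2 hA2 hB2)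
  rw [hvalue] at htot
  exact htot.congr fun n => (hrw n).symm

end
end

section
/- The denominator of the static fixed-effects estimand decomposes over cohorts and lags: V = Σ_{e=1}^{T} Σ_{l=0}^{T−e} w(e,l). Consequently, if V ≠ 0, the normalized weights ω(e,l) := w(e,l)/V satisfy Σ_{e=1}^{T} Σ_{l=0}^{T−e} ω(e,l) = 1. (Weights-sum-to-one claim of Proposition 1; no parallel trends or no anticipation assumption is needed.) -/
open MeasureTheory Filter

noncomputable section

/-- Two-way demeaning of a panel of random variables. -/
def ddot {Ω : Type*} [MeasurableSpace Ω] (μ : Measure Ω) (T : ℕ) (X : ℕ → Ω → ℝ)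
    (t : ℕ) (ω : Ω) : ℝ :=
  X t ω - (∫ ω', X t ω' ∂μ)
    - (1 / ((T : ℝ) + 1)) * ∑ s ∈ Finset.range (T + 1), X s ω
    + (1 / ((T : ℝ) + 1)) * ∑ s ∈ Finset.range (T + 1), ∫ ω', X s ω' ∂μ

/-- Treatment status `D_t := 1{E ≤ t}`. -/
def Dstat {Ω : Type*} (E : Ω → ℕ) (t : ℕ) (ω : Ω) : ℝ :=
  if E ω ≤ t then 1 else 0

/-- Denominator of the static fixed-effects estimand, `V := Σ_{t=0}^{T} E[D_t·D̈_t]`. -/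
def Vstat {Ω : Type*} [MeasurableSpace Ω] (μ : Measure Ω) (T : ℕ) (E : Ω → ℕ) : ℝ :=
  ∑ t ∈ Finset.range (T + 1), ∫ ω, Dstat E t ω * ddot μ T (Dstat E) t ω ∂μ

/-- Unnormalized weight
`w(e,l) := P(E=e)·(1 − P(E ≤ e+l) − (T−e+1)/(T+1) + (1/(T+1))·Σ_{s=0}^{T} P(E ≤ s))`. -/
def wstat {Ω : Type*} [MeasurableSpace Ω] (μ : Measure Ω) (T : ℕ) (E : Ω → ℕ)
    (e l : ℕ) : ℝ :=
  (μ {ω | E ω = e}).toReal *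
    (1 - (μ {ω | E ω ≤ e + l}).toReal - ((T : ℝ) - (e : ℝ) + 1) / ((T : ℝ) + 1)
      + (1 / ((T : ℝ) + 1)) * ∑ s ∈ Finset.range (T + 1), (μ {ω | E ω ≤ s}).toReal)

set_option linter.unusedSectionVars false

section Aux
variable {Ω : Type*} [MeasurableSpace Ω] (μ : Measure Ω) [IsProbabilityMeasure μ]
  (E : Ω → ℕ)

lemma Dstat_eq_indicator (t : ℕ) :
    Dstat E t = Set.indicator {ω | E ω ≤ t} (fun _ => (1:ℝ)) := by
  funext ω
  simp [Dstat, Set.indicator_apply, Set.mem_setOf_eq]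

lemma measSetD (hE : Measurable E) (t : ℕ) : MeasurableSet {ω | E ω ≤ t} :=
  hE measurableSet_Iic

lemma Dstat_integrable (hE : Measurable E) (t : ℕ) : Integrable (Dstat E t) μ := by
  rw [Dstat_eq_indicator]
  exact (integrable_const 1).indicator (measSetD E hE t)

lemma Dstat_integral (hE : Measurable E) (t : ℕ) :
    ∫ ω, Dstat E t ω ∂μ = (μ {ω | E ω ≤ t}).toReal := by
  rw [Dstat_eq_indicator]
  exact integral_indicator_one (measSetD E hE t)

lemma Dstat_mul (t s : ℕ) (ω : Ω) :
    Dstat E t ω * Dstat E s ω = Dstat E (min t s) ω := by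
  by_cases h1 : E ω ≤ t <;> by_cases h2 : E ω ≤ s <;>
    simp [Dstat, h1, h2, le_min_iff]

/-- Per-period integral of `D_t · D̈_t` in terms of the cdf `F`. -/
lemma integral_D_ddot (hE : Measurable E) (T t : ℕ) :
    ∫ ω, Dstat E t ω * ddot μ T (Dstat E) t ω ∂μ
      = (1 + (1 / ((T : ℝ) + 1)) * (∑ s ∈ Finset.range (T + 1), (μ {ω | E ω ≤ s}).toReal)
            - (μ {ω | E ω ≤ t}).toReal) * (μ {ω | E ω ≤ t}).toReal
        - (1 / ((T : ℝ) + 1)) * ∑ s ∈ Finset.range (T + 1), (μ {ω | E ω ≤ min t s}).toReal := by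
  set F : ℕ → ℝ := fun u => (μ {ω | E ω ≤ u}).toReal with hF
  set c : ℝ := 1 / ((T : ℝ) + 1) with hc
  set S : ℝ := ∑ s ∈ Finset.range (T + 1), F s with hS
  have key : ∀ ω, Dstat E t ω * ddot μ T (Dstat E) t ω
      = (1 + c * S - F t) * Dstat E t ω
        - c * ∑ s ∈ Finset.range (T + 1), Dstat E (min t s) ω := by
    intro ω
    have h1 : Dstat E t ω * Dstat E t ω = Dstat E t ω := by
      by_cases h : E ω ≤ t <;> simp [Dstat, h]
    have h2 : Dstat E t ω * (∑ s ∈ Finset.range (T + 1), Dstat E s ω)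
        = ∑ s ∈ Finset.range (T + 1), Dstat E (min t s) ω := by
      rw [Finset.mul_sum]
      exact Finset.sum_congr rfl fun s _ => Dstat_mul E t s ω
    simp only [ddot, Dstat_integral μ E hE]
    linear_combination h1 - c * h2
  calc ∫ ω, Dstat E t ω * ddot μ T (Dstat E) t ω ∂μ
      = ∫ ω, ((1 + c * S - F t) * Dstat E t ω
          - c * ∑ s ∈ Finset.range (T + 1), Dstat E (min t s) ω) ∂μ := by
        exact integral_congr_ae (Filter.Eventually.of_forall key)
    _ = (1 + c * S - F t) * F t - c * ∑ s ∈ Finset.range (T + 1), F (min t s) := by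
        rw [integral_sub ((Dstat_integrable μ E hE t).const_mul _)
            ((integrable_finset_sum _ (fun s _ => Dstat_integrable μ E hE (min t s))).const_mul _),
          integral_const_mul, integral_const_mul,
          integral_finset_sum _ (fun s _ => Dstat_integrable μ E hE (min t s))]
        rw [Dstat_integral μ E hE,
          Finset.sum_congr rfl (fun s _ => Dstat_integral μ E hE (min t s))]

/-- The cdf is the partial sum of the pmf, given support in `[1,T]`. -/
lemma cdf_eq_sum (hE : Measurable E) (T : ℕ)
    (hsupp : μ {ω | 1 ≤ E ω ∧ E ω ≤ T} = 1) {t : ℕ} (ht : t ≤ T) :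
    (μ {ω | E ω ≤ t}).toReal = ∑ e ∈ Finset.Icc 1 t, (μ {ω | E ω = e}).toReal := by
  have h0 : μ {ω | E ω = 0} = 0 := by
    have hc : μ {ω | 1 ≤ E ω ∧ E ω ≤ T}ᶜ = 0 := by
      rw [prob_compl_eq_zero_iff]
      · exact hsupp
      · exact ((hE measurableSet_Ici).inter (hE measurableSet_Iic))
    refine le_antisymm (le_trans (measure_mono ?_) hc.le) zero_le
    intro ω hω
    simp only [Set.mem_setOf_eq] at hω
    simp [Set.mem_compl_iff, Set.mem_setOf_eq, hω]
  have hset : {ω | E ω ≤ t} = ⋃ e ∈ (Finset.range (t+1) : Finset ℕ), {ω | E ω = e} := by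
    ext ω
    simp only [Set.mem_setOf_eq, Set.mem_iUnion, Finset.mem_range, Finset.mem_coe]
    constructor
    · intro h; exact ⟨E ω, by omega, rfl⟩
    · rintro ⟨e, he, rfl⟩; omega
  have hdisj : (Finset.range (t+1) : Set ℕ).PairwiseDisjoint
      (fun e => {ω | E ω = e}) := by
    intro a _ b _ hab
    refine Set.disjoint_left.2 fun ω ha hb => ?_
    exact hab (ha.symm.trans hb)
  rw [hset, measure_biUnion_finset hdisj (fun e _ => hE (measurableSet_singleton e)),
    ENNReal.toReal_sum (fun e _ => measure_ne_top μ _)]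
  have hins : Finset.range (t+1) = insert 0 (Finset.Icc 1 t) := by
    ext x; simp [Finset.mem_range, Finset.mem_Icc]; omega
  rw [hins, Finset.sum_insert (by simp), h0]
  simp

/-- Combinatorial identity on reals. -/
lemma sum_weights_eq (T : ℕ) (p F : ℕ → ℝ)
    (hF : ∀ t ≤ T, F t = ∑ e ∈ Finset.Icc 1 t, p e) :
    ∑ e ∈ Finset.Icc 1 T, ∑ l ∈ Finset.range (T - e + 1),
        p e * (1 - F (e + l) - ((T : ℝ) - (e : ℝ) + 1) / ((T : ℝ) + 1)
          + (1 / ((T : ℝ) + 1)) * ∑ s ∈ Finset.range (T + 1), F s)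
      = ∑ t ∈ Finset.range (T + 1),
          ((1 + (1 / ((T : ℝ) + 1)) * (∑ s ∈ Finset.range (T + 1), F s) - F t) * F t
            - (1 / ((T : ℝ) + 1)) * ∑ s ∈ Finset.range (T + 1), F (min t s)) := by
  set c : ℝ := 1 / ((T : ℝ) + 1) with hc
  set S : ℝ := ∑ s ∈ Finset.range (T + 1), F s with hS
  -- reindex inner sum over l to sum over t ∈ Ico e (T+1)
  have step1 : ∀ e ∈ Finset.Icc 1 T,
      ∑ l ∈ Finset.range (T - e + 1),
        p e * (1 - F (e + l) - ((T : ℝ) - (e : ℝ) + 1) / ((T : ℝ) + 1) + c * S)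
      = ∑ t ∈ Finset.Ico e (T+1),
        p e * (1 - F t - ((T : ℝ) - (e : ℝ) + 1) / ((T : ℝ) + 1) + c * S) := by
    intro e he
    rw [Finset.mem_Icc] at he
    have h1 : T - e + 1 = T + 1 - e := by omega
    rw [h1, Finset.sum_Ico_eq_sum_range]
  rw [Finset.sum_congr rfl step1]
  -- extend to full range with indicator
  have step2 : ∀ e ∈ Finset.Icc 1 T,
      ∑ t ∈ Finset.Ico e (T+1),
        p e * (1 - F t - ((T : ℝ) - (e : ℝ) + 1) / ((T : ℝ) + 1) + c * S)
      = ∑ t ∈ Finset.range (T+1), if e ≤ t then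
        p e * (1 - F t - ((T : ℝ) - (e : ℝ) + 1) / ((T : ℝ) + 1) + c * S) else 0 := by
    intro e _
    rw [← Finset.sum_filter]
    congr 1
    ext x; simp [Finset.mem_Ico, Finset.mem_filter, Finset.mem_range]; omega
  rw [Finset.sum_congr rfl step2, Finset.sum_comm]
  refine Finset.sum_congr rfl fun t ht => ?_
  rw [Finset.mem_range] at ht
  have ht' : t ≤ T := by omega
  -- collapse indicator
  have step3 : ∑ e ∈ Finset.Icc 1 T, (if e ≤ t then
        p e * (1 - F t - ((T : ℝ) - (e : ℝ) + 1) / ((T : ℝ) + 1) + c * S) else 0)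
      = ∑ e ∈ Finset.Icc 1 t,
        p e * (1 - F t - ((T : ℝ) - (e : ℝ) + 1) / ((T : ℝ) + 1) + c * S) := by
    rw [← Finset.sum_filter]
    congr 1
    ext x; simp [Finset.mem_Icc, Finset.mem_filter]; omega
  rw [step3]
  -- key sub-lemma: Σ_s F (min t s) = Σ_{e∈Icc 1 t} p e * (T - e + 1)
  have hsub : ∑ s ∈ Finset.range (T + 1), F (min t s)
      = ∑ e ∈ Finset.Icc 1 t, p e * ((T : ℝ) - (e : ℝ) + 1) := by
    have h1 : ∀ s ∈ Finset.range (T+1), F (min t s)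
        = ∑ e ∈ Finset.Icc 1 t, (if e ≤ s then p e else 0) := by
      intro s hs
      rw [Finset.mem_range] at hs
      rw [hF (min t s) (le_trans (min_le_left _ _) ht'), ← Finset.sum_filter]
      congr 1
      ext x; simp [Finset.mem_Icc, Finset.mem_filter, le_min_iff]; omega
    rw [Finset.sum_congr rfl h1, Finset.sum_comm]
    refine Finset.sum_congr rfl fun e he => ?_
    rw [Finset.mem_Icc] at he
    rw [Finset.sum_ite, Finset.sum_const_zero, add_zero, Finset.sum_const]
    have hfil : Finset.filter (fun s => e ≤ s) (Finset.range (T+1)) = Finset.Ico e (T+1) := by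
      ext x; simp [Finset.mem_Ico, Finset.mem_filter, Finset.mem_range]; omega
    rw [hfil, Nat.card_Ico, nsmul_eq_mul, mul_comm]
    congr 1
    have : e ≤ T := le_trans he.2 ht'
    push_cast [Nat.cast_sub (by omega : e ≤ T + 1)]
    ring
  -- now termwise algebra
  rw [hsub, hF t ht']
  have expand : ∀ e ∈ Finset.Icc 1 t,
      p e * (1 - (∑ e ∈ Finset.Icc 1 t, p e) - ((T : ℝ) - (e : ℝ) + 1) / ((T : ℝ) + 1) + c * S)
      = (1 + c * S - ∑ e ∈ Finset.Icc 1 t, p e) * p e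
          - c * (p e * ((T : ℝ) - (e : ℝ) + 1)) := by
    intro e _; rw [hc]; ring
  rw [Finset.sum_congr rfl expand, Finset.sum_sub_distrib, ← Finset.mul_sum, ← Finset.mul_sum]
end Aux

/-- Proposition 1 (weights sum to one): `V = Σ_{e=1}^{T} Σ_{l=0}^{T−e} w(e,l)`, and hence if
`V ≠ 0` the normalized weights sum to one. -/
theorem static_fe_weights_sum_to_one
    {Ω : Type*} [MeasurableSpace Ω] (μ : Measure Ω) [IsProbabilityMeasure μ]
    (T : ℕ) (hT : 1 ≤ T)
    (E : Ω → ℕ) (hE : Measurable E)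
    (hsupp : μ {ω | 1 ≤ E ω ∧ E ω ≤ T} = 1)
    (hpos : ∀ e ∈ Finset.Icc 1 T, 0 < μ {ω | E ω = e}) :
    Vstat μ T E = ∑ e ∈ Finset.Icc 1 T, ∑ l ∈ Finset.range (T - e + 1), wstat μ T E e l
      ∧ (Vstat μ T E ≠ 0 →
        ∑ e ∈ Finset.Icc 1 T, ∑ l ∈ Finset.range (T - e + 1),
          wstat μ T E e l / Vstat μ T E = 1) := by
  have hmain : Vstat μ T E
      = ∑ e ∈ Finset.Icc 1 T, ∑ l ∈ Finset.range (T - e + 1), wstat μ T E e l := by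
    rw [Vstat, Finset.sum_congr rfl (fun t _ => integral_D_ddot μ E hE T t)]
    simp only [wstat]
    exact (sum_weights_eq T (fun e => (μ {ω | E ω = e}).toReal)
      (fun u => (μ {ω | E ω ≤ u}).toReal)
      (fun t ht => cdf_eq_sum μ E hE T hsupp ht)).symm
  refine ⟨hmain, fun hV => ?_⟩
  simp only [← Finset.sum_div]
  rw [← hmain, div_self hV]

end
end

section
/- Assume parallel trends (PT) and no anticipation (NA), and assume V ≠ 0. Then the static fixed-effects estimand γ := (Σ_{t=0}^{T} E[Y_t·D̈_t]) / V satisfies γ = Σ_{e=1}^{T} Σ_{l=0}^{T−e} (w(e,l)/V)·CATT(e,l). (Proposition 1: the probability limit of the static two-way fixed-effects coefficient is a weighted average of the cohort-specific average treatment effects on the treated.) -/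
open MeasureTheory Filter

lemma aux_count (T e : ℕ) (he : e ≤ T) :
    ∑ s ∈ Finset.range (T+1), (if e ≤ s then (1:ℝ) else 0) = (T:ℝ) - e + 1 := by
  have h1 : Finset.Icc e T ⊆ Finset.range (T+1) := by
    intro x hx; simp only [Finset.mem_Icc] at hx; simp only [Finset.mem_range]; omega
  rw [← Finset.sum_subset h1 (by
    intro x hx hx2
    simp only [Finset.mem_range] at hx
    simp only [Finset.mem_Icc, not_and, not_le] at hx2
    rw [if_neg]; omega)]
  rw [Finset.sum_congr rfl (fun x hx => if_pos (Finset.mem_Icc.mp hx).1),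
    Finset.sum_const, Nat.card_Icc]
  have : ((T + 1 - e : ℕ) : ℝ) = (T:ℝ) + 1 - e := by
    have : e ≤ T + 1 := by omega
    push_cast [this]; ring
  rw [nsmul_eq_mul, this]; ring

lemma aux_measure_le {Ω : Type*} [MeasurableSpace Ω] (μ : Measure Ω) [IsProbabilityMeasure μ]
    (T : ℕ) (E : Ω → ℕ) (hE : Measurable E)
    (hsupp : μ {ω | 1 ≤ E ω ∧ E ω ≤ T} = 1) (s : ℕ) :
    (μ {ω | E ω ≤ s}).toReal
      = ∑ e ∈ Finset.Icc 1 T, (if e ≤ s then (μ {ω | E ω = e}).toReal else 0) := by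
  classical
  have hgm : MeasurableSet {ω | 1 ≤ E ω ∧ E ω ≤ T} := by
    have : {ω | 1 ≤ E ω ∧ E ω ≤ T} = E ⁻¹' (Set.Icc 1 T) := rfl
    rw [this]; exact hE measurableSet_Icc
  have hnull : μ {ω | 1 ≤ E ω ∧ E ω ≤ T}ᶜ = 0 := by
    rw [measure_compl hgm (measure_ne_top μ _), hsupp, measure_univ, tsub_self]
  have hinter : μ {ω | E ω ≤ s} = μ ({ω | E ω ≤ s} ∩ {ω | 1 ≤ E ω ∧ E ω ≤ T}) := by
    refine le_antisymm ?_ (measure_mono Set.inter_subset_left)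
    calc μ {ω | E ω ≤ s} ≤ μ (({ω | E ω ≤ s} ∩ {ω | 1 ≤ E ω ∧ E ω ≤ T})
        ∪ {ω | 1 ≤ E ω ∧ E ω ≤ T}ᶜ) := by
          apply measure_mono; intro ω hω
          by_cases h : 1 ≤ E ω ∧ E ω ≤ T
          · exact Or.inl ⟨hω, h⟩
          · exact Or.inr h
      _ ≤ μ ({ω | E ω ≤ s} ∩ {ω | 1 ≤ E ω ∧ E ω ≤ T}) + μ {ω | 1 ≤ E ω ∧ E ω ≤ T}ᶜ :=
          measure_union_le _ _
      _ = μ ({ω | E ω ≤ s} ∩ {ω | 1 ≤ E ω ∧ E ω ≤ T}) := by rw [hnull, add_zero]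
  have hset : {ω | E ω ≤ s} ∩ {ω | 1 ≤ E ω ∧ E ω ≤ T}
      = ⋃ e ∈ (Finset.Icc 1 T).filter (· ≤ s), {ω | E ω = e} := by
    ext ω
    simp only [Set.mem_inter_iff, Set.mem_setOf_eq, Set.mem_iUnion, Finset.mem_filter,
      Finset.mem_Icc]
    constructor
    · rintro ⟨h1, h2, h3⟩; exact ⟨E ω, ⟨⟨h2, h3⟩, h1⟩, rfl⟩
    · rintro ⟨e, ⟨⟨h2, h3⟩, h1⟩, rfl⟩; exact ⟨h1, h2, h3⟩
  have hdisj : Set.Pairwise ↑((Finset.Icc 1 T).filter (· ≤ s))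
      (Function.onFun Disjoint fun e => {ω | E ω = e}) := by
    intro a _ b _ hab
    simp only [Function.onFun, Set.disjoint_left, Set.mem_setOf_eq]
    intro ω h1 h2; exact hab (h1 ▸ h2 ▸ rfl)
  rw [hinter, hset, measure_biUnion_finset hdisj (fun e _ => hE (measurableSet_singleton e)),
    ENNReal.toReal_sum (fun e _ => measure_ne_top μ _), Finset.sum_filter]

lemma aux_integral_decomp {Ω : Type*} [MeasurableSpace Ω] (μ : Measure Ω)
    [IsProbabilityMeasure μ]
    (T : ℕ) (E : Ω → ℕ) (hE : Measurable E)
    (hsupp : μ {ω | 1 ≤ E ω ∧ E ω ≤ T} = 1)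
    (f : Ω → ℝ) (hf : ∀ e ∈ Finset.Icc 1 T, IntegrableOn f {ω | E ω = e} μ) :
    ∫ ω, f ω ∂μ = ∑ e ∈ Finset.Icc 1 T, ∫ ω in {ω' | E ω' = e}, f ω ∂μ := by
  have hgood : {ω | 1 ≤ E ω ∧ E ω ≤ T} = ⋃ e ∈ Finset.Icc 1 T, {ω | E ω = e} := by
    ext ω
    simp only [Set.mem_setOf_eq, Set.mem_iUnion, Finset.mem_Icc]
    constructor
    · rintro ⟨h1, h2⟩; exact ⟨E ω, ⟨h1, h2⟩, rfl⟩
    · rintro ⟨e, ⟨h1, h2⟩, rfl⟩; exact ⟨h1, h2⟩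
  have hae : ∀ᵐ x ∂μ, x ∈ {ω | 1 ≤ E ω ∧ E ω ≤ T} := by
    rw [MeasureTheory.ae_iff]
    have hgm : MeasurableSet {ω | 1 ≤ E ω ∧ E ω ≤ T} := hE measurableSet_Icc
    have : {a | ¬ a ∈ {ω | 1 ≤ E ω ∧ E ω ≤ T}} = {ω | 1 ≤ E ω ∧ E ω ≤ T}ᶜ := rfl
    rw [this, measure_compl hgm (measure_ne_top μ _), hsupp, measure_univ, tsub_self]
  have h1 : ∫ ω, f ω ∂μ = ∫ ω in {ω | 1 ≤ E ω ∧ E ω ≤ T}, f ω ∂μ := by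
    conv_lhs => rw [← Measure.restrict_eq_self_of_ae_mem hae]
  rw [h1, hgood]
  exact integral_biUnion_finset _ (fun e _ => hE (measurableSet_singleton e))
    (by
      intro a _ b _ hab
      simp only [Function.onFun, Set.disjoint_left, Set.mem_setOf_eq]
      intro ω h1 h2; exact hab (h1 ▸ h2 ▸ rfl)) hf

noncomputable section







/-- Proposition 1: under parallel trends and no anticipation, the static two-way
fixed-effects estimand `γ = (Σ_t E[Y_t·D̈_t])/V` is the weighted average
`Σ_{e=1}^{T} Σ_{l=0}^{T−e} (w(e,l)/V)·CATT(e,l)`. -/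
theorem static_fe_estimand_decomposition
    {Ω : Type*} [MeasurableSpace Ω] (μ : Measure Ω) [IsProbabilityMeasure μ]
    (T : ℕ) (hT : 1 ≤ T)
    (E : Ω → ℕ) (hE : Measurable E)
    (hsupp : μ {ω | 1 ≤ E ω ∧ E ω ≤ T} = 1)
    (hpos : ∀ e ∈ Finset.Icc 1 T, 0 < μ {ω | E ω = e})
    (Ye : ℕ → ℕ → Ω → ℝ) (Yinf : ℕ → Ω → ℝ)
    (hL2e : ∀ e ∈ Finset.Icc 1 T, ∀ t ≤ T, MemLp (Ye e t) 2 μ)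
    (hL2inf : ∀ t ≤ T, MemLp (Yinf t) 2 μ)
    (hPT : PT μ T E Yinf) (hNA : NA μ T Ye Yinf)
    (hV : Vstat μ T E ≠ 0) :
    (∑ t ∈ Finset.range (T + 1),
        ∫ ω, obsY T E Ye Yinf t ω * ddot μ T (Dstat E) t ω ∂μ) / Vstat μ T E
      = ∑ e ∈ Finset.Icc 1 T, ∑ l ∈ Finset.range (T - e + 1),
          (wstat μ T E e l / Vstat μ T E) * CATT μ E Ye Yinf e (l : ℤ) := by
  classical
  have hT1 : ((T:ℝ)+1) ≠ 0 := by positivity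
  have hpne : ∀ e ∈ Finset.Icc 1 T, (μ {ω | E ω = e}).toReal ≠ 0 := fun e he =>
    ne_of_gt (ENNReal.toReal_pos (hpos e he).ne' (measure_ne_top μ _))
  set g : ℕ → ℕ → ℝ := fun t e =>
    (if e ≤ t then (1:ℝ) else 0) - (μ {ω | E ω ≤ t}).toReal
      - ((T:ℝ) - (e:ℝ) + 1)/((T:ℝ)+1)
      + (1/((T:ℝ)+1)) * ∑ s ∈ Finset.range (T+1), (μ {ω | E ω ≤ s}).toReal with hgdef
  -- integral of treatment indicator
  have hDint : ∀ t : ℕ, ∫ ω, Dstat E t ω ∂μ = (μ {ω | E ω ≤ t}).toReal := by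
    intro t
    have hs : MeasurableSet {ω | E ω ≤ t} := hE measurableSet_Iic
    rw [← measureReal_def, ← integral_indicator_one hs]
    congr 1; ext ω
    simp [Dstat, Set.indicator_apply]
  -- pointwise value of the demeaned treatment
  have hddot : ∀ t : ℕ, ∀ e ∈ Finset.Icc 1 T, ∀ ω : Ω, E ω = e →
      ddot μ T (Dstat E) t ω = g t e := by
    intro t e he ω hω
    obtain ⟨he1, he2⟩ := Finset.mem_Icc.mp he
    have hsum : ∑ s ∈ Finset.range (T+1), Dstat E s ω = (T:ℝ) - e + 1 := by
      rw [← aux_count T e he2]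
      exact Finset.sum_congr rfl fun s _ => by simp [Dstat, hω]
    have hsum2 : ∑ s ∈ Finset.range (T+1), ∫ ω', Dstat E s ω' ∂μ
        = ∑ s ∈ Finset.range (T+1), (μ {ω | E ω ≤ s}).toReal :=
      Finset.sum_congr rfl fun s _ => hDint s
    simp only [ddot]
    rw [hDint t, hsum, hsum2]
    simp only [hgdef, Dstat, hω]
    rcases le_or_gt e t with h | h
    · simp only [if_pos h]; ring
    · simp only [if_neg (not_le.mpr h)]; ring
  -- pointwise value of the observed outcome
  have hobs : ∀ t : ℕ, ∀ e ∈ Finset.Icc 1 T, ∀ ω : Ω, E ω = e →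
      obsY T E Ye Yinf t ω = Ye e t ω := by
    intro t e he ω hω
    simp only [obsY]
    rw [Finset.sum_eq_single e]
    · rw [hω, if_pos rfl, mul_one]; ring
    · intro b _ hb; rw [hω, if_neg (fun h => hb h.symm), mul_zero]
    · intro h; exact absurd he h
  have hYeInt : ∀ e ∈ Finset.Icc 1 T, ∀ t ≤ T, Integrable (Ye e t) μ :=
    fun e he t ht => (hL2e e he t ht).integrable one_le_two
  have hYinfInt : ∀ t ≤ T, Integrable (Yinf t) μ :=
    fun t ht => (hL2inf t ht).integrable one_le_two
  have hprodInt : ∀ t ≤ T, ∀ e ∈ Finset.Icc 1 T,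
      IntegrableOn (fun ω => obsY T E Ye Yinf t ω * ddot μ T (Dstat E) t ω)
        {ω | E ω = e} μ := by
    intro t ht e he
    have base : IntegrableOn (fun ω => Ye e t ω * g t e) {ω | E ω = e} μ :=
      ((hYeInt e he t ht).mul_const _).integrableOn
    apply base.congr
    filter_upwards [ae_restrict_mem (hE (measurableSet_singleton e))] with ω hω
    rw [hobs t e he ω hω, hddot t e he ω hω]
  -- step 1: decompose each time-t integral over cohorts
  have hstep1 : ∀ t ≤ T,
      ∫ ω, obsY T E Ye Yinf t ω * ddot μ T (Dstat E) t ω ∂μ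
        = ∑ e ∈ Finset.Icc 1 T, (∫ ω in {ω' | E ω' = e}, Ye e t ω ∂μ) * g t e := by
    intro t ht
    rw [aux_integral_decomp μ T E hE hsupp _ (fun e he => hprodInt t ht e he)]
    refine Finset.sum_congr rfl fun e he => ?_
    rw [← integral_mul_const]
    apply setIntegral_congr_fun (hE (measurableSet_singleton e))
    intro ω hω
    show obsY T E Ye Yinf t ω * ddot μ T (Dstat E) t ω = Ye e t ω * g t e
    rw [hobs t e he ω hω, hddot t e he ω hω]
  -- column sums of g vanish
  have hgcol : ∀ e ∈ Finset.Icc 1 T, ∑ t ∈ Finset.range (T+1), g t e = 0 := by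
    intro e he
    obtain ⟨he1, he2⟩ := Finset.mem_Icc.mp he
    simp only [hgdef, Finset.sum_add_distrib, Finset.sum_sub_distrib, Finset.sum_const,
      Finset.card_range, nsmul_eq_mul, aux_count T e he2]
    field_simp
    push_cast; ring
  have hp1 : ∑ e ∈ Finset.Icc 1 T, (μ {ω | E ω = e}).toReal = 1 := by
    have hqT : μ {ω | E ω ≤ T} = 1 := by
      refine le_antisymm prob_le_one ?_
      rw [← hsupp]; exact measure_mono (fun ω h => h.2)
    have h := aux_measure_le μ T E hE hsupp T
    rw [hqT] at h
    simp only [ENNReal.toReal_one] at h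
    rw [h]
    exact Finset.sum_congr rfl fun e he => (if_pos (Finset.mem_Icc.mp he).2).symm
  -- row sums of g (weighted by probabilities) vanish
  have hgrow : ∀ t : ℕ, ∑ e ∈ Finset.Icc 1 T, (μ {ω | E ω = e}).toReal * g t e = 0 := by
    intro t
    have e1 : ∑ e ∈ Finset.Icc 1 T, (μ {ω | E ω = e}).toReal * (if e ≤ t then (1:ℝ) else 0)
        = (μ {ω | E ω ≤ t}).toReal := by
      rw [aux_measure_le μ T E hE hsupp t]
      exact Finset.sum_congr rfl fun e _ => by split <;> simp
    have e3 : ∑ e ∈ Finset.Icc 1 T, (μ {ω | E ω = e}).toReal * ((T:ℝ) - e + 1)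
        = ∑ s ∈ Finset.range (T+1), (μ {ω | E ω ≤ s}).toReal := by
      rw [Finset.sum_congr rfl (fun s _ => aux_measure_le μ T E hE hsupp s), Finset.sum_comm]
      refine Finset.sum_congr rfl fun e he => ?_
      obtain ⟨he1, he2⟩ := Finset.mem_Icc.mp he
      rw [← aux_count T e he2, Finset.mul_sum]
      exact (Finset.sum_congr rfl fun s _ => by split <;> simp).symm
    calc ∑ e ∈ Finset.Icc 1 T, (μ {ω | E ω = e}).toReal * g t e
        = ∑ e ∈ Finset.Icc 1 T, ((μ {ω | E ω = e}).toReal * (if e ≤ t then (1:ℝ) else 0)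
            - (μ {ω | E ω = e}).toReal * (μ {ω | E ω ≤ t}).toReal
            - (1/((T:ℝ)+1)) * ((μ {ω | E ω = e}).toReal * ((T:ℝ) - e + 1))
            + ((1/((T:ℝ)+1)) * (∑ s ∈ Finset.range (T+1), (μ {ω | E ω ≤ s}).toReal))
              * (μ {ω | E ω = e}).toReal) := by
          refine Finset.sum_congr rfl fun e _ => ?_
          simp only [hgdef]; ring
      _ = 0 := by
          rw [Finset.sum_add_distrib, Finset.sum_sub_distrib, Finset.sum_sub_distrib,
            e1, ← Finset.sum_mul, ← Finset.mul_sum, ← Finset.mul_sum, hp1, e3]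
          ring
  -- parallel-trends representation of baseline set integrals
  have hBt : ∀ t ≤ T, ∀ e ∈ Finset.Icc 1 T,
      ∫ ω in {ω' | E ω' = e}, Yinf t ω ∂μ
        = (∫ ω in {ω' | E ω' = e}, Yinf 0 ω ∂μ)
          + (μ {ω | E ω = e}).toReal * ((∫ ω, Yinf t ω ∂μ) - ∫ ω, Yinf 0 ω ∂μ) := by
    intro t ht e he
    have hpt := hPT e he 0 (Nat.zero_le T) t ht
    simp only [cexp] at hpt
    have hsub : ∫ ω in {ω' | E ω' = e}, (Yinf t ω - Yinf 0 ω) ∂μ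
        = (∫ ω in {ω' | E ω' = e}, Yinf t ω ∂μ) - ∫ ω in {ω' | E ω' = e}, Yinf 0 ω ∂μ :=
      integral_sub ((hYinfInt t ht).integrableOn) ((hYinfInt 0 (Nat.zero_le T)).integrableOn)
    have hM : ∫ ω, (Yinf t ω - Yinf 0 ω) ∂μ = (∫ ω, Yinf t ω ∂μ) - ∫ ω, Yinf 0 ω ∂μ :=
      integral_sub (hYinfInt t ht) (hYinfInt 0 (Nat.zero_le T))
    rw [hsub, hM, div_eq_iff (hpne e he)] at hpt
    linear_combination hpt
  -- no-anticipation: treatment-effect set integrals vanish before treatment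
  have hJ0 : ∀ e ∈ Finset.Icc 1 T, ∀ t, t < e →
      ∫ ω in {ω' | E ω' = e}, (Ye e t ω - Yinf t ω) ∂μ = 0 := by
    intro e he t hte
    have h0 : (fun ω => Ye e t ω - Yinf t ω) =ᵐ[μ.restrict {ω' | E ω' = e}]
        (fun _ => (0:ℝ)) := by
      apply ae_restrict_of_ae
      filter_upwards [hNA e he t hte] with ω hω
      simp [hω]
    rw [integral_congr_ae h0, integral_zero]
  -- link to CATT
  have hJcatt : ∀ e ∈ Finset.Icc 1 T, ∀ l : ℕ,
      ∫ ω in {ω' | E ω' = e}, (Ye e (e + l) ω - Yinf (e + l) ω) ∂μ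
        = (μ {ω | E ω = e}).toReal * CATT μ E Ye Yinf e (l : ℤ) := by
    intro e he l
    have htoNat : (((e:ℕ):ℤ) + ((l:ℕ):ℤ)).toNat = e + l := by omega
    simp only [CATT, cexp, htoNat]
    rw [mul_comm, div_mul_cancel₀ _ (hpne e he)]
  -- baseline contribution vanishes
  have hSB : ∑ t ∈ Finset.range (T+1), ∑ e ∈ Finset.Icc 1 T,
      (∫ ω in {ω' | E ω' = e}, Yinf t ω ∂μ) * g t e = 0 := by
    have h1 : ∀ t ∈ Finset.range (T+1),
        ∑ e ∈ Finset.Icc 1 T, (∫ ω in {ω' | E ω' = e}, Yinf t ω ∂μ) * g t e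
          = ∑ e ∈ Finset.Icc 1 T,
              ((∫ ω in {ω' | E ω' = e}, Yinf 0 ω ∂μ)
                - (μ {ω | E ω = e}).toReal * ∫ ω, Yinf 0 ω ∂μ) * g t e
            + (∫ ω, Yinf t ω ∂μ)
              * ∑ e ∈ Finset.Icc 1 T, (μ {ω | E ω = e}).toReal * g t e := by
      intro t ht
      have ht' : t ≤ T := Nat.lt_succ_iff.mp (Finset.mem_range.mp ht)
      rw [Finset.mul_sum, ← Finset.sum_add_distrib]
      refine Finset.sum_congr rfl fun e he => ?_
      rw [hBt t ht' e he]; ring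
    rw [Finset.sum_congr rfl h1, Finset.sum_add_distrib]
    have h2 : ∑ t ∈ Finset.range (T+1), (∫ ω, Yinf t ω ∂μ)
        * ∑ e ∈ Finset.Icc 1 T, (μ {ω | E ω = e}).toReal * g t e = 0 :=
      Finset.sum_eq_zero fun t _ => by rw [hgrow t, mul_zero]
    have h3 : ∑ t ∈ Finset.range (T+1), ∑ e ∈ Finset.Icc 1 T,
        ((∫ ω in {ω' | E ω' = e}, Yinf 0 ω ∂μ)
          - (μ {ω | E ω = e}).toReal * ∫ ω, Yinf 0 ω ∂μ) * g t e = 0 := by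
      rw [Finset.sum_comm]
      exact Finset.sum_eq_zero fun e he => by rw [← Finset.mul_sum, hgcol e he, mul_zero]
    rw [h2, h3, add_zero]
  -- treatment contribution equals the weighted CATT sum
  have hTreat : ∑ t ∈ Finset.range (T+1), ∑ e ∈ Finset.Icc 1 T,
      (∫ ω in {ω' | E ω' = e}, (Ye e t ω - Yinf t ω) ∂μ) * g t e
        = ∑ e ∈ Finset.Icc 1 T, ∑ l ∈ Finset.range (T - e + 1),
            wstat μ T E e l * CATT μ E Ye Yinf e (l : ℤ) := by
    rw [Finset.sum_comm]
    refine Finset.sum_congr rfl fun e he => ?_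
    obtain ⟨he1, he2⟩ := Finset.mem_Icc.mp he
    have hsub : Finset.Ico e (T+1) ⊆ Finset.range (T+1) := by
      intro x hx; simp only [Finset.mem_Ico] at hx; simp only [Finset.mem_range]; omega
    rw [← Finset.sum_subset hsub (by
      intro t ht ht2
      simp only [Finset.mem_range] at ht
      simp only [Finset.mem_Ico, not_and, not_lt] at ht2
      rw [hJ0 e he t (by omega), zero_mul])]
    rw [Finset.sum_Ico_eq_sum_range]
    have hcard : T + 1 - e = T - e + 1 := by omega
    rw [hcard]
    refine Finset.sum_congr rfl fun l hl => ?_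
    rw [hJcatt e he l]
    have hw : wstat μ T E e l = (μ {ω | E ω = e}).toReal * g (e + l) e := by
      simp only [wstat, hgdef, if_pos (Nat.le_add_right e l)]
    rw [hw]; ring
  -- assemble the numerator
  have hNum : (∑ t ∈ Finset.range (T + 1),
      ∫ ω, obsY T E Ye Yinf t ω * ddot μ T (Dstat E) t ω ∂μ)
        = ∑ e ∈ Finset.Icc 1 T, ∑ l ∈ Finset.range (T - e + 1),
            wstat μ T E e l * CATT μ E Ye Yinf e (l : ℤ) := by
    have h1 : ∀ t ∈ Finset.range (T+1),
        ∫ ω, obsY T E Ye Yinf t ω * ddot μ T (Dstat E) t ω ∂μ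
          = (∑ e ∈ Finset.Icc 1 T,
              (∫ ω in {ω' | E ω' = e}, (Ye e t ω - Yinf t ω) ∂μ) * g t e)
            + ∑ e ∈ Finset.Icc 1 T, (∫ ω in {ω' | E ω' = e}, Yinf t ω ∂μ) * g t e := by
      intro t ht
      have ht' : t ≤ T := Nat.lt_succ_iff.mp (Finset.mem_range.mp ht)
      rw [hstep1 t ht', ← Finset.sum_add_distrib]
      refine Finset.sum_congr rfl fun e he => ?_
      have hs : ∫ ω in {ω' | E ω' = e}, (Ye e t ω - Yinf t ω) ∂μ
          = (∫ ω in {ω' | E ω' = e}, Ye e t ω ∂μ)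
            - ∫ ω in {ω' | E ω' = e}, Yinf t ω ∂μ :=
        integral_sub ((hYeInt e he t ht').integrableOn) ((hYinfInt t ht').integrableOn)
      rw [hs]; ring
    rw [Finset.sum_congr rfl h1, Finset.sum_add_distrib, hSB, add_zero, hTreat]
  rw [hNum, Finset.sum_div]
  refine Finset.sum_congr rfl fun e he => ?_
  rw [Finset.sum_div]
  refine Finset.sum_congr rfl fun l hl => ?_
  rw [div_mul_eq_mul_div]

end
end

section
/- For every e ∈ {1,…,T}, the unnormalized weight attached to the last-period cohort effect satisfies w(e, T−e) = P(E = e)·(e − E[E])/(T+1). In particular, if e < E[E] then w(e, T−e) < 0; hence if in addition V > 0, the normalized weight ω(e, T−e) := w(e, T−e)/V on CATT(e, T−e) in the static fixed-effects estimand is strictly negative. (Negative-weights corollary of Proposition 1: because all units are treated by period T, early cohorts' long-run effects receive negative weight.) -/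
open MeasureTheory Filter

noncomputable section

/-- Negative-weights corollary of Proposition 1: for every cohort `e`,
`w(e, T−e) = P(E=e)·(e − E[E])/(T+1)`; in particular the weight is strictly negative for
early cohorts (`e < E[E]`), and so is the normalized weight when `V > 0`. -/
theorem static_fe_last_period_weight_negative
    {Ω : Type*} [MeasurableSpace Ω] (μ : Measure Ω) [IsProbabilityMeasure μ]
    (T : ℕ) (hT : 1 ≤ T)
    (E : Ω → ℕ) (hE : Measurable E)
    (hsupp : μ {ω | 1 ≤ E ω ∧ E ω ≤ T} = 1)
    (hpos : ∀ e ∈ Finset.Icc 1 T, 0 < μ {ω | E ω = e}) :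
    ∀ e ∈ Finset.Icc 1 T,
      wstat μ T E e (T - e)
          = (μ {ω | E ω = e}).toReal * ((e : ℝ) - ∫ ω, (E ω : ℝ) ∂μ) / ((T : ℝ) + 1)
        ∧ ((e : ℝ) < ∫ ω, (E ω : ℝ) ∂μ → wstat μ T E e (T - e) < 0)
        ∧ ((e : ℝ) < ∫ ω, (E ω : ℝ) ∂μ → 0 < Vstat μ T E →
            wstat μ T E e (T - e) / Vstat μ T E < 0) := by
  have hmeas : ∀ s : ℕ, MeasurableSet {ω | E ω ≤ s} := fun s => hE measurableSet_Iic
  have hgt : ∀ s : ℕ, MeasurableSet {ω | s < E ω} := fun s => hE measurableSet_Ioi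
  -- a.e. bound on E
  have hae : ∀ᵐ ω ∂μ, 1 ≤ E ω ∧ E ω ≤ T := by
    rw [ae_iff]
    have hsub : {ω | ¬(1 ≤ E ω ∧ E ω ≤ T)} = {ω | 1 ≤ E ω ∧ E ω ≤ T}ᶜ := by
      ext ω; simp
    have hm : MeasurableSet {ω | 1 ≤ E ω ∧ E ω ≤ T} := by
      have : {ω | 1 ≤ E ω ∧ E ω ≤ T} = E ⁻¹' {n | 1 ≤ n ∧ n ≤ T} := rfl
      rw [this]; exact hE (by trivial)
    rw [hsub, measure_compl hm (measure_ne_top μ _), hsupp, measure_univ, tsub_self]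
  have hET : μ {ω | E ω ≤ T} = 1 := by
    refine le_antisymm prob_le_one ?_
    rw [← hsupp]
    exact measure_mono fun ω h => h.2
  -- complement probabilities
  have hq : ∀ s : ℕ, (μ {ω | s < E ω}).toReal = 1 - (μ {ω | E ω ≤ s}).toReal := by
    intro s
    have hcompl : {ω | E ω ≤ s}ᶜ = {ω | s < E ω} := by ext ω; simp [not_le]
    have := measure_compl (hmeas s) (measure_ne_top μ _)
    rw [hcompl, measure_univ] at this
    rw [this, ENNReal.toReal_sub_of_le prob_le_one (by norm_num)]
    simp
  -- the expectation identity
  have hint : ∫ ω, (E ω : ℝ) ∂μ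
      = ∑ s ∈ Finset.range (T + 1), (1 - (μ {ω | E ω ≤ s}).toReal) := by
    have hind : ∀ s : ℕ, (fun ω => if s < E ω then (1:ℝ) else 0)
        = Set.indicator {ω | s < E ω} (fun _ => (1:ℝ)) := by
      intro s; ext ω; simp [Set.indicator_apply, Set.mem_setOf_eq]
    have hintg : ∀ s ∈ Finset.range (T + 1),
        Integrable (fun ω => if s < E ω then (1:ℝ) else 0) μ := by
      intro s _
      rw [hind s]
      exact (integrable_const (1:ℝ)).indicator (hgt s)
    have haeq : (fun ω => (E ω : ℝ))
        =ᵐ[μ] fun ω => ∑ s ∈ Finset.range (T + 1), if s < E ω then (1:ℝ) else 0 := by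
      filter_upwards [hae] with ω hω
      have hsum : ∑ s ∈ Finset.range (T + 1), (if s < E ω then (1:ℝ) else 0)
          = ∑ s ∈ Finset.range (E ω), (if s < E ω then (1:ℝ) else 0) := by
        refine (Finset.sum_subset (Finset.range_subset_range.mpr (by omega)) ?_).symm
        intro s _ hs
        rw [Finset.mem_range, not_lt] at hs
        simp [not_lt.mpr hs]
      rw [hsum]
      rw [Finset.sum_congr rfl (fun s hs => if_pos (Finset.mem_range.mp hs))]
      simp
    rw [integral_congr_ae haeq, integral_finset_sum _ hintg]
    refine Finset.sum_congr rfl fun s _ => ?_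
    rw [hind s, integral_indicator_const _ (hgt s)]
    simpa [Measure.real] using hq s
  intro e he
  rw [Finset.mem_Icc] at he
  obtain ⟨he1, he2⟩ := he
  have hc : 0 < (μ {ω | E ω = e}).toReal :=
    ENNReal.toReal_pos (hpos e (Finset.mem_Icc.mpr ⟨he1, he2⟩)).ne' (measure_ne_top μ _)
  have hTpos : (0:ℝ) < (T:ℝ) + 1 := by positivity
  have hkey : wstat μ T E e (T - e)
      = (μ {ω | E ω = e}).toReal * ((e : ℝ) - ∫ ω, (E ω : ℝ) ∂μ) / ((T : ℝ) + 1) := by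
    have hte : e + (T - e) = T := by omega
    have hS : ∑ s ∈ Finset.range (T + 1), (μ {ω | E ω ≤ s}).toReal
        = ((T:ℝ) + 1) - ∫ ω, (E ω : ℝ) ∂μ := by
      rw [hint, Finset.sum_sub_distrib, Finset.sum_const, Finset.card_range]
      ring
    rw [wstat, hte, hET, hS]
    have heT : (e:ℝ) ≤ (T:ℝ) := by exact_mod_cast he2
    field_simp
    ring_nf
    simp only [ENNReal.toReal_one]
    ring
  refine ⟨hkey, ?_, ?_⟩
  · intro hlt
    rw [hkey]
    exact div_neg_of_neg_of_pos (mul_neg_of_pos_of_neg hc (by linarith)) hTpos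
  · intro hlt hV
    refine div_neg_of_neg_of_pos ?_ hV
    rw [hkey]
    exact div_neg_of_neg_of_pos (mul_neg_of_pos_of_neg hc (by linarith)) hTpos

end
end

section
/- Assume parallel trends (PT) and no anticipation (NA), assume V ≠ 0, and assume treatment effects are static and stationary, i.e. there is a constant c ∈ ℝ with CATT(e,l) = c for every e ∈ {1,…,T} and every 0 ≤ l ≤ T−e. Then the static fixed-effects estimand γ := (Σ_{t=0}^{T} E[Y_t·D̈_t]) / V equals c. (Special case of Proposition 1: under static and stationary treatment effects the static FE estimator recovers the constant treatment effect.) -/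
open MeasureTheory Filter

noncomputable section

section AuxProof

variable {Ω : Type*} [MeasurableSpace Ω]

/-- The value of the two-way demeaned treatment as a function of the cohort. -/
def Gfun (μ : Measure Ω) (T : ℕ) (E : Ω → ℕ) (t n : ℕ) : ℝ :=
  (if n ≤ t then (1:ℝ) else 0) - (∫ ω', Dstat E t ω' ∂μ)
    - (1 / ((T : ℝ) + 1)) * ∑ s ∈ Finset.range (T + 1), (if n ≤ s then (1:ℝ) else 0)
    + (1 / ((T : ℝ) + 1)) * ∑ s ∈ Finset.range (T + 1), ∫ ω', Dstat E s ω' ∂μ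

lemma ddot_Dstat_eq (μ : Measure Ω) (T : ℕ) (E : Ω → ℕ) (t : ℕ) (ω : Ω) :
    ddot μ T (Dstat E) t ω = Gfun μ T E t (E ω) := rfl

lemma Gfun_bdd (μ : Measure Ω) (T : ℕ) (E : Ω → ℕ) (t : ℕ) :
    ∃ C, ∀ n, ‖Gfun μ T E t n‖ ≤ C := by
  refine ⟨1 + ‖∫ ω', Dstat E t ω' ∂μ‖ + 1 +
      ‖(1 / ((T : ℝ) + 1)) * ∑ s ∈ Finset.range (T + 1), ∫ ω', Dstat E s ω' ∂μ‖,
    fun n => ?_⟩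
  have h1 : ‖(if n ≤ t then (1:ℝ) else 0)‖ ≤ 1 := by split <;> simp
  have h2 : ‖(1 / ((T : ℝ) + 1)) *
      ∑ s ∈ Finset.range (T + 1), (if n ≤ s then (1:ℝ) else 0)‖ ≤ 1 := by
    rw [norm_mul]
    have hb : ‖∑ s ∈ Finset.range (T + 1), (if n ≤ s then (1:ℝ) else 0)‖ ≤ ((T:ℝ) + 1) := by
      refine (norm_sum_le _ _).trans ?_
      calc ∑ s ∈ Finset.range (T+1), ‖(if n ≤ s then (1:ℝ) else 0)‖
          ≤ ∑ _s ∈ Finset.range (T+1), (1:ℝ) :=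
            Finset.sum_le_sum (fun s _ => by split <;> simp)
        _ = ((T:ℝ)+1) := by simp
    have hnn : (0:ℝ) ≤ 1 / ((T:ℝ)+1) := by positivity
    calc ‖1 / ((T:ℝ)+1)‖ * ‖∑ s ∈ Finset.range (T + 1), (if n ≤ s then (1:ℝ) else 0)‖
        ≤ (1 / ((T:ℝ)+1)) * ((T:ℝ)+1) := by
          rw [Real.norm_eq_abs, abs_of_nonneg hnn]
          exact mul_le_mul_of_nonneg_left hb hnn
      _ = 1 := by field_simp
  unfold Gfun
  set a := (if n ≤ t then (1:ℝ) else 0) with ha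
  set b := ∫ ω', Dstat E t ω' ∂μ with hbdef
  set u := (1 / ((T : ℝ) + 1)) * ∑ s ∈ Finset.range (T + 1), (if n ≤ s then (1:ℝ) else 0) with hu
  set K := (1 / ((T : ℝ) + 1)) * ∑ s ∈ Finset.range (T + 1), ∫ ω', Dstat E s ω' ∂μ with hK
  calc ‖a - b - u + K‖ ≤ ‖a - b - u‖ + ‖K‖ := norm_add_le _ _
    _ ≤ ‖a - b‖ + ‖u‖ + ‖K‖ := by linarith [norm_sub_le (a - b) u]
    _ ≤ ‖a‖ + ‖b‖ + ‖u‖ + ‖K‖ := by linarith [norm_sub_le a b]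
    _ ≤ 1 + ‖b‖ + 1 + ‖K‖ := by linarith

lemma Gfun_sum_t (μ : Measure Ω) (T : ℕ) (E : Ω → ℕ) (n : ℕ) :
    ∑ t ∈ Finset.range (T + 1), Gfun μ T E t n = 0 := by
  have hT : ((T:ℝ)+1) ≠ 0 := by positivity
  unfold Gfun
  rw [Finset.sum_add_distrib, Finset.sum_sub_distrib, Finset.sum_sub_distrib,
    Finset.sum_const, Finset.sum_const, Finset.card_range]
  simp only [nsmul_eq_mul]
  push_cast
  field_simp
  ring

end AuxProof

/-- Special case of Proposition 1: under static and stationary treatment effects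
(`CATT(e,l) = c` for all cohorts and lags), the static fixed-effects estimand equals `c`. -/
theorem static_fe_estimand_static_stationary
    {Ω : Type*} [MeasurableSpace Ω] (μ : Measure Ω) [IsProbabilityMeasure μ]
    (T : ℕ) (hT : 1 ≤ T)
    (E : Ω → ℕ) (hE : Measurable E)
    (hsupp : μ {ω | 1 ≤ E ω ∧ E ω ≤ T} = 1)
    (hpos : ∀ e ∈ Finset.Icc 1 T, 0 < μ {ω | E ω = e})
    (Ye : ℕ → ℕ → Ω → ℝ) (Yinf : ℕ → Ω → ℝ)
    (hL2e : ∀ e ∈ Finset.Icc 1 T, ∀ t ≤ T, MemLp (Ye e t) 2 μ)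
    (hL2inf : ∀ t ≤ T, MemLp (Yinf t) 2 μ)
    (hPT : PT μ T E Yinf) (hNA : NA μ T Ye Yinf)
    (hV : Vstat μ T E ≠ 0)
    (c : ℝ)
    (hconst : ∀ e ∈ Finset.Icc 1 T, ∀ l : ℕ, l ≤ T - e →
      CATT μ E Ye Yinf e (l : ℤ) = c) :
    (∑ t ∈ Finset.range (T + 1),
        ∫ ω, obsY T E Ye Yinf t ω * ddot μ T (Dstat E) t ω ∂μ) / Vstat μ T E = c := by
  classical
  have hT1 : ((T:ℝ) + 1) ≠ 0 := by positivity
  have hsetEq : ∀ n : ℕ, MeasurableSet {ω | E ω = n} := by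
    intro n
    have h : {ω | E ω = n} = E ⁻¹' {n} := rfl
    rw [h]; exact hE MeasurableSet.of_discrete
  have hsetLe : ∀ n : ℕ, MeasurableSet {ω | E ω ≤ n} := by
    intro n
    have h : {ω | E ω ≤ n} = E ⁻¹' {m | m ≤ n} := rfl
    rw [h]; exact hE MeasurableSet.of_discrete
  have hmeasG : ∀ t, Measurable fun ω => Gfun μ T E t (E ω) :=
    fun t => (Measurable.of_discrete (f := Gfun μ T E t)).comp hE
  have hDmeas : ∀ s : ℕ, Measurable (Dstat E s) := by
    intro s; unfold Dstat
    exact Measurable.ite (hsetLe s) measurable_const measurable_const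
  have hDint : ∀ s : ℕ, Integrable (Dstat E s) μ := by
    intro s
    refine (integrable_const (1:ℝ)).mono' (hDmeas s).aestronglyMeasurable
      (Filter.Eventually.of_forall fun ω => ?_)
    unfold Dstat; split <;> simp
  have hIntMulG : ∀ t, ∀ h : Ω → ℝ, Integrable h μ →
      Integrable (fun ω => h ω * Gfun μ T E t (E ω)) μ := by
    intro t h hh
    obtain ⟨C, hC⟩ := Gfun_bdd μ T E t
    have := hh.bdd_mul (hmeasG t).aestronglyMeasurable
      (Filter.Eventually.of_forall fun ω => hC (E ω))
    simpa [mul_comm] using this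
  -- partition of the integral over cohorts
  have hUset : {ω | 1 ≤ E ω ∧ E ω ≤ T} = ⋃ e ∈ Finset.Icc 1 T, {ω' | E ω' = e} := by
    ext ω
    simp only [Set.mem_setOf_eq, Set.mem_iUnion, Finset.mem_Icc, exists_prop]
    constructor
    · rintro ⟨h1, h2⟩; exact ⟨E ω, ⟨h1, h2⟩, rfl⟩
    · rintro ⟨e, he, h⟩; rw [h]; exact he
  have hSmeas : MeasurableSet {ω | 1 ≤ E ω ∧ E ω ≤ T} := by
    have h : {ω | 1 ≤ E ω ∧ E ω ≤ T} = E ⁻¹' {n | 1 ≤ n ∧ n ≤ T} := rfl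
    rw [h]; exact hE MeasurableSet.of_discrete
  have hres : μ.restrict (⋃ e ∈ Finset.Icc 1 T, {ω' | E ω' = e}) = μ := by
    refine Measure.restrict_eq_self_of_ae_mem ?_
    rw [← hUset]
    have h0 : μ {ω | 1 ≤ E ω ∧ E ω ≤ T}ᶜ = 0 := by
      have := measure_compl hSmeas (measure_ne_top μ _)
      rw [hsupp, measure_univ, tsub_self] at this
      exact this
    exact MeasureTheory.ae_iff.2 h0
  have hpart : ∀ h : Ω → ℝ, Integrable h μ →
      ∫ ω, h ω ∂μ = ∑ e ∈ Finset.Icc 1 T, ∫ ω in {ω' | E ω' = e}, h ω ∂μ := by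
    intro h hh
    conv_lhs => rw [← hres]
    refine integral_biUnion_finset _ (fun e _ => hsetEq e) ?_ (fun e _ => hh.integrableOn)
    intro a _ b _ hab
    simp only [Function.onFun, Set.disjoint_left]
    intro ω h1 h2
    simp only [Set.mem_setOf_eq] at h1 h2
    exact hab (by rw [← h1, ← h2])
  have hext : ∀ (t e : ℕ) (h : Ω → ℝ),
      ∫ ω in {ω' | E ω' = e}, h ω * Gfun μ T E t (E ω) ∂μ
        = (∫ ω in {ω' | E ω' = e}, h ω ∂μ) * Gfun μ T E t e := by
    intro t e h
    rw [← integral_mul_const]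
    refine setIntegral_congr_fun (hsetEq e) fun ω hω => ?_
    simp only [Set.mem_setOf_eq] at hω
    rw [hω]
  have hIntYinf : ∀ t ≤ T, Integrable (Yinf t) μ := fun t ht =>
    (hL2inf t ht).integrable one_le_two
  have hIntYe : ∀ e ∈ Finset.Icc 1 T, ∀ t ≤ T, Integrable (Ye e t) μ := fun e he t ht =>
    (hL2e e he t ht).integrable one_le_two
  have hIntObs : ∀ t ≤ T, Integrable (obsY T E Ye Yinf t) μ := by
    intro t ht
    unfold obsY
    refine (hIntYinf t ht).add (integrable_finset_sum _ fun e he => ?_)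
    have hf : Integrable (fun ω => Ye e t ω - Yinf t ω) μ :=
      (hIntYe e he t ht).sub (hIntYinf t ht)
    have hind : Measurable fun ω => (if E ω = e then (1:ℝ) else 0) :=
      Measurable.ite (hsetEq e) measurable_const measurable_const
    have := hf.bdd_mul hind.aestronglyMeasurable
      (c := 1) (Filter.Eventually.of_forall fun ω => by split <;> simp)
    simpa [mul_comm] using this
  have hpne : ∀ e ∈ Finset.Icc 1 T, (μ {ω | E ω = e}).toReal ≠ 0 := fun e he =>
    (ENNReal.toReal_pos (hpos e he).ne' (measure_ne_top μ _)).ne'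
  have hCATT : ∀ e ∈ Finset.Icc 1 T, ∀ t, e ≤ t → t ≤ T →
      ∫ ω in {ω' | E ω' = e}, (Ye e t ω - Yinf t ω) ∂μ
        = c * (μ {ω | E ω = e}).toReal := by
    intro e he t het ht
    have hle : t - e ≤ T - e := by omega
    have hc := hconst e he (t - e) hle
    unfold CATT cexp at hc
    have htn : ((e : ℤ) + ((t - e : ℕ) : ℤ)).toNat = t := by omega
    rw [htn] at hc
    exact (div_eq_iff (hpne e he)).1 hc
  have hPTval : ∀ e ∈ Finset.Icc 1 T, ∀ t ≤ T,
      ∫ ω in {ω' | E ω' = e}, Yinf t ω ∂μ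
        = ∫ ω in {ω' | E ω' = e}, Yinf 0 ω ∂μ
          + (∫ ω, (Yinf t ω - Yinf 0 ω) ∂μ) * (μ {ω | E ω = e}).toReal := by
    intro e he t ht
    have h := hPT e he 0 (Nat.zero_le T) t ht
    unfold cexp at h
    have hd := (div_eq_iff (hpne e he)).1 h
    have hsub : ∫ ω in {ω' | E ω' = e}, (Yinf t ω - Yinf 0 ω) ∂μ
        = (∫ ω in {ω' | E ω' = e}, Yinf t ω ∂μ)
          - ∫ ω in {ω' | E ω' = e}, Yinf 0 ω ∂μ :=
      integral_sub (hIntYinf t ht).integrableOn (hIntYinf 0 (Nat.zero_le T)).integrableOn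
    rw [hsub] at hd
    linarith
  have hNAval : ∀ e ∈ Finset.Icc 1 T, ∀ t, t < e →
      ∫ ω in {ω' | E ω' = e}, Ye e t ω ∂μ = ∫ ω in {ω' | E ω' = e}, Yinf t ω ∂μ := by
    intro e he t hlt
    exact integral_congr_ae (ae_restrict_of_ae (hNA e he t hlt))
  have hYeSplit : ∀ e ∈ Finset.Icc 1 T, ∀ t ≤ T,
      ∫ ω in {ω' | E ω' = e}, Ye e t ω ∂μ
        = ∫ ω in {ω' | E ω' = e}, Yinf t ω ∂μ
          + (if e ≤ t then c * (μ {ω | E ω = e}).toReal else 0) := by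
    intro e he t ht
    by_cases h : e ≤ t
    · rw [if_pos h]
      have hsub : ∫ ω in {ω' | E ω' = e}, (Ye e t ω - Yinf t ω) ∂μ
          = (∫ ω in {ω' | E ω' = e}, Ye e t ω ∂μ)
            - ∫ ω in {ω' | E ω' = e}, Yinf t ω ∂μ :=
        integral_sub (hIntYe e he t ht).integrableOn (hIntYinf t ht).integrableOn
      have h2 := hCATT e he t h ht
      rw [hsub] at h2
      linarith
    · rw [if_neg h, add_zero]
      exact hNAval e he t (by omega)
  have hobs : ∀ e ∈ Finset.Icc 1 T, ∀ t : ℕ,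
      ∫ ω in {ω' | E ω' = e}, obsY T E Ye Yinf t ω ∂μ
        = ∫ ω in {ω' | E ω' = e}, Ye e t ω ∂μ := by
    intro e he t
    refine setIntegral_congr_fun (hsetEq e) fun ω hω => ?_
    simp only [Set.mem_setOf_eq] at hω
    unfold obsY
    rw [Finset.sum_eq_single e (fun b _ hb => by rw [hω, if_neg (Ne.symm hb), mul_zero])
      (fun hne => absurd he hne)]
    rw [hω, if_pos rfl, mul_one]
    ring
  have hDset : ∀ e t : ℕ, ∫ ω in {ω' | E ω' = e}, Dstat E t ω ∂μ
      = (μ {ω | E ω = e}).toReal * (if e ≤ t then (1:ℝ) else 0) := by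
    intro e t
    rw [setIntegral_congr_fun (hsetEq e) (g := fun _ => if e ≤ t then (1:ℝ) else 0)
      (fun ω hω => by simp only [Set.mem_setOf_eq] at hω; unfold Dstat; rw [hω]),
      setIntegral_const]
    simp [smul_eq_mul]
    rfl
  have hEddot : ∀ t, ∫ ω, ddot μ T (Dstat E) t ω ∂μ = 0 := by
    intro t
    have h1 : Integrable (fun ω => Dstat E t ω - ∫ ω', Dstat E t ω' ∂μ) μ :=
      (hDint t).sub (integrable_const _)
    have h2 : Integrable
        (fun ω => (1 / ((T:ℝ)+1)) * ∑ s ∈ Finset.range (T+1), Dstat E s ω) μ :=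
      (integrable_finset_sum _ fun s _ => hDint s).const_mul _
    have h12 : Integrable (fun ω => Dstat E t ω - (∫ ω', Dstat E t ω' ∂μ)
        - (1 / ((T:ℝ)+1)) * ∑ s ∈ Finset.range (T+1), Dstat E s ω) μ := h1.sub h2
    unfold ddot
    rw [integral_add h12 (integrable_const _), integral_sub h1 h2,
      integral_sub (hDint t) (integrable_const _), integral_const, integral_const_mul,
      integral_finset_sum _ fun s _ => hDint s, integral_const]
    simp [measure_univ]
  have hGE : ∀ t, ∑ e ∈ Finset.Icc 1 T,
      (μ {ω | E ω = e}).toReal * Gfun μ T E t e = 0 := by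
    intro t
    have hint : Integrable (fun ω => Gfun μ T E t (E ω)) μ := by
      simpa using hIntMulG t (fun _ => (1:ℝ)) (integrable_const 1)
    have h0 : ∫ ω, Gfun μ T E t (E ω) ∂μ = 0 := hEddot t
    have hp := hpart _ hint
    rw [h0] at hp
    have he : ∀ e ∈ Finset.Icc 1 T, ∫ ω in {ω' | E ω' = e}, Gfun μ T E t (E ω) ∂μ
        = (μ {ω | E ω = e}).toReal * Gfun μ T E t e := by
      intro e _
      rw [setIntegral_congr_fun (hsetEq e) (g := fun _ => Gfun μ T E t e)
        (fun ω hω => by simp only [Set.mem_setOf_eq] at hω; rw [hω]), setIntegral_const]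
      simp [smul_eq_mul]
      exact Or.inl rfl
    rw [Finset.sum_congr rfl he] at hp
    linarith
  have hterm : ∀ t ∈ Finset.range (T+1),
      ∫ ω, obsY T E Ye Yinf t ω * ddot μ T (Dstat E) t ω ∂μ
        = ∑ e ∈ Finset.Icc 1 T,
            (∫ ω in {ω' | E ω' = e}, Ye e t ω ∂μ) * Gfun μ T E t e := by
    intro t htm
    have ht : t ≤ T := by have := Finset.mem_range.1 htm; omega
    simp only [ddot_Dstat_eq]
    rw [hpart _ (hIntMulG t _ (hIntObs t ht))]
    exact Finset.sum_congr rfl fun e he => by rw [hext t e _, hobs e he t]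
  have hVterm : ∀ t ∈ Finset.range (T+1),
      ∫ ω, Dstat E t ω * ddot μ T (Dstat E) t ω ∂μ
        = ∑ e ∈ Finset.Icc 1 T,
            ((μ {ω | E ω = e}).toReal * (if e ≤ t then (1:ℝ) else 0)) * Gfun μ T E t e := by
    intro t _
    simp only [ddot_Dstat_eq]
    rw [hpart _ (hIntMulG t _ (hDint t))]
    exact Finset.sum_congr rfl fun e he => by rw [hext t e _, hDset e t]
  have key : ∀ t ≤ T, ∀ e ∈ Finset.Icc 1 T,
      (∫ ω in {ω' | E ω' = e}, Ye e t ω ∂μ) * Gfun μ T E t e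
        = (∫ ω in {ω' | E ω' = e}, Yinf 0 ω ∂μ) * Gfun μ T E t e
          + (∫ ω, (Yinf t ω - Yinf 0 ω) ∂μ) *
              ((μ {ω | E ω = e}).toReal * Gfun μ T E t e)
          + c * (((μ {ω | E ω = e}).toReal * (if e ≤ t then (1:ℝ) else 0))
              * Gfun μ T E t e) := by
    intro t ht e he
    rw [hYeSplit e he t ht, hPTval e he t ht]
    by_cases h : e ≤ t <;> simp only [h, if_true, if_false] <;> ring
  have hZero1 : ∑ t ∈ Finset.range (T+1), ∑ e ∈ Finset.Icc 1 T,
      (∫ ω in {ω' | E ω' = e}, Yinf 0 ω ∂μ) * Gfun μ T E t e = 0 := by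
    rw [Finset.sum_comm]
    refine Finset.sum_eq_zero fun e _ => ?_
    rw [← Finset.mul_sum, Gfun_sum_t, mul_zero]
  have hZero2 : ∑ t ∈ Finset.range (T+1), ∑ e ∈ Finset.Icc 1 T,
      (∫ ω, (Yinf t ω - Yinf 0 ω) ∂μ) *
        ((μ {ω | E ω = e}).toReal * Gfun μ T E t e) = 0 := by
    refine Finset.sum_eq_zero fun t _ => ?_
    rw [← Finset.mul_sum, hGE t, mul_zero]
  have hNum : (∑ t ∈ Finset.range (T + 1),
      ∫ ω, obsY T E Ye Yinf t ω * ddot μ T (Dstat E) t ω ∂μ) = c * Vstat μ T E := by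
    have h1 : (∑ t ∈ Finset.range (T + 1),
        ∫ ω, obsY T E Ye Yinf t ω * ddot μ T (Dstat E) t ω ∂μ)
        = ∑ t ∈ Finset.range (T+1), ∑ e ∈ Finset.Icc 1 T,
            ((∫ ω in {ω' | E ω' = e}, Yinf 0 ω ∂μ) * Gfun μ T E t e
            + (∫ ω, (Yinf t ω - Yinf 0 ω) ∂μ) *
                ((μ {ω | E ω = e}).toReal * Gfun μ T E t e)
            + c * (((μ {ω | E ω = e}).toReal * (if e ≤ t then (1:ℝ) else 0))
                * Gfun μ T E t e)) := by
      refine Finset.sum_congr rfl fun t htm => ?_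
      have ht : t ≤ T := by have := Finset.mem_range.1 htm; omega
      rw [hterm t htm]
      exact Finset.sum_congr rfl fun e he => key t ht e he
    rw [h1]
    simp only [Finset.sum_add_distrib]
    rw [hZero1, hZero2, zero_add, zero_add]
    simp only [← Finset.mul_sum]
    congr 1
    unfold Vstat
    exact Finset.sum_congr rfl fun t htm => (hVterm t htm).symm
  rw [hNum, mul_div_assoc, div_self hV, mul_one]

end
end

section
/- Assume parallel trends (PT) and no anticipation (NA). Then the numerator of the dynamic fixed-effects estimand decomposes over cohorts and post-treatment lags: Σ_{t=0}^{T} E[D̈_t·Y_t] = Σ_{e=1}^{T} Σ_{l'=0}^{T−e} CATT(e,l')·c(e,l') as vectors in ℝ^L. (Numerator decomposition in the proof of Proposition 2: under PT and NA the dynamic two-way fixed-effects system depends on the outcome data only through the CATTs.) -/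
open MeasureTheory Filter

noncomputable section

/-- Relative-time indicator `Dˡ_t := 1{t − E = l}`. -/
def Drel {Ω : Type*} (E : Ω → ℕ) (l : ℤ) (t : ℕ) (ω : Ω) : ℝ :=
  if (t : ℤ) - (E ω : ℤ) = l then 1 else 0

/-- Two-way demeaned relative-time indicator `D̈ˡ_t`. -/
def ddotRel {Ω : Type*} [MeasurableSpace Ω] (μ : Measure Ω) (T : ℕ) (E : Ω → ℕ)
    (l : ℤ) (t : ℕ) (ω : Ω) : ℝ :=
  Drel E l t ω - (∫ ω', Drel E l t ω' ∂μ)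
    - (1 / ((T : ℝ) + 1)) * ∑ s ∈ Finset.range (T + 1), Drel E l s ω
    + (1 / ((T : ℝ) + 1)) * ∑ s ∈ Finset.range (T + 1), ∫ ω', Drel E l s ω' ∂μ

/-- Value of the two-way demeaned indicator as a function of the cohort. -/
def Ddot {Ω : Type*} [MeasurableSpace Ω] (μ : Measure Ω) (T : ℕ) (E : Ω → ℕ)
    (l : ℤ) (t : ℕ) (e : ℕ) : ℝ :=
  (if (t : ℤ) - (e : ℤ) = l then 1 else 0) - (∫ ω', Drel E l t ω' ∂μ)
    - (1 / ((T : ℝ) + 1)) * ∑ s ∈ Finset.range (T + 1), (if (s : ℤ) - (e : ℤ) = l then 1 else 0)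
    + (1 / ((T : ℝ) + 1)) * ∑ s ∈ Finset.range (T + 1), ∫ ω', Drel E l s ω' ∂μ

lemma ddot_eq {Ω : Type*} [MeasurableSpace Ω] (μ : Measure Ω) (T : ℕ) (E : Ω → ℕ)
    (l : ℤ) (t : ℕ) (ω : Ω) : ddotRel μ T E l t ω = Ddot μ T E l t (E ω) := rfl

lemma Drel_integrable {Ω : Type*} [MeasurableSpace Ω] (μ : Measure Ω)
    [IsProbabilityMeasure μ] (E : Ω → ℕ) (hE : Measurable E) (l : ℤ) (s : ℕ) :
    Integrable (Drel E l s) μ := by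
  have h : Drel E l s = Set.indicator (E ⁻¹' {n | (s:ℤ) - (n:ℤ) = l}) (fun _ => (1:ℝ)) := by
    funext ω
    by_cases h : (s:ℤ) - (E ω : ℤ) = l <;> simp [Drel, Set.indicator_apply, h]
  rw [h]
  exact (integrable_const 1).indicator (hE MeasurableSet.of_discrete)

/-- Sum over time of the demeaned indicator values vanishes. -/
lemma Ddot_sum_time {Ω : Type*} [MeasurableSpace Ω] (μ : Measure Ω) (T : ℕ) (E : Ω → ℕ)
    (l : ℤ) (e : ℕ) : ∑ t ∈ Finset.range (T + 1), Ddot μ T E l t e = 0 := by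
  have hT : ((T:ℝ) + 1) ≠ 0 := by positivity
  simp only [Ddot, Finset.sum_add_distrib, Finset.sum_sub_distrib, Finset.sum_const,
    Finset.card_range, nsmul_eq_mul]
  push_cast
  field_simp
  ring

/-- Integral of the demeaned indicator vanishes. -/
lemma ddotRel_integral {Ω : Type*} [MeasurableSpace Ω] (μ : Measure Ω)
    [IsProbabilityMeasure μ] (T : ℕ) (E : Ω → ℕ) (hE : Measurable E) (l : ℤ) (t : ℕ) :
    ∫ ω, ddotRel μ T E l t ω ∂μ = 0 := by
  have h1 : Integrable (fun ω => ∑ s ∈ Finset.range (T+1), Drel E l s ω) μ :=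
    integrable_finset_sum _ (fun s _ => Drel_integrable μ E hE l s)
  have hA : Integrable (fun ω => Drel E l t ω - (∫ ω', Drel E l t ω' ∂μ)) μ :=
    (Drel_integrable μ E hE l t).sub (integrable_const _)
  have hB : Integrable
      (fun ω => 1/((T:ℝ)+1) * ∑ s ∈ Finset.range (T+1), Drel E l s ω) μ := h1.const_mul _
  have hAB : Integrable (fun ω =>
      (Drel E l t ω - (∫ ω', Drel E l t ω' ∂μ))
        - 1/((T:ℝ)+1) * ∑ s ∈ Finset.range (T+1), Drel E l s ω) μ := hA.sub hB
  simp only [ddotRel, sub_sub]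
  rw [show (fun ω => Drel E l t ω - ((∫ ω', Drel E l t ω' ∂μ)
        + 1/((T:ℝ)+1) * ∑ s ∈ Finset.range (T+1), Drel E l s ω)
        + 1/((T:ℝ)+1) * ∑ s ∈ Finset.range (T+1), ∫ ω', Drel E l s ω' ∂μ)
      = (fun ω => ((Drel E l t ω - (∫ ω', Drel E l t ω' ∂μ))
        - 1/((T:ℝ)+1) * ∑ s ∈ Finset.range (T+1), Drel E l s ω)
        + 1/((T:ℝ)+1) * ∑ s ∈ Finset.range (T+1), ∫ ω', Drel E l s ω' ∂μ)
      from funext fun ω => by ring,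
    integral_add hAB (integrable_const _), integral_sub hA hB,
    integral_sub (Drel_integrable μ E hE l t) (integrable_const _),
    integral_const, integral_const, integral_const_mul,
    integral_finset_sum _ (fun s _ => Drel_integrable μ E hE l s)]
  simp [measure_univ]


/-- Key decomposition: integral of `g(E)·f` over cohorts. -/
lemma key_decomp {Ω : Type*} [MeasurableSpace Ω] (μ : Measure Ω)
    [IsProbabilityMeasure μ] (T : ℕ) (E : Ω → ℕ) (hE : Measurable E)
    (hsupp : μ {ω | 1 ≤ E ω ∧ E ω ≤ T} = 1)
    (g : ℕ → ℝ) (f : Ω → ℝ) (hf : Integrable f μ) :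
    ∫ ω, g (E ω) * f ω ∂μ
      = ∑ e ∈ Finset.Icc 1 T, g e * ∫ ω in {ω' | E ω' = e}, f ω ∂μ := by
  have hmeas : ∀ e : ℕ, MeasurableSet {ω | E ω = e} :=
    fun e => hE (measurableSet_singleton e)
  have hae : ∀ᵐ ω ∂μ, 1 ≤ E ω ∧ E ω ≤ T := by
    rw [ae_iff]
    have hm : MeasurableSet {ω | 1 ≤ E ω ∧ E ω ≤ T} :=
      hE (show MeasurableSet {n : ℕ | 1 ≤ n ∧ n ≤ T} from .of_discrete)
    have := measure_compl hm (measure_ne_top μ _)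
    rw [hsupp, measure_univ] at this
    simpa [Set.compl_setOf] using this
  have step : (fun ω => g (E ω) * f ω) =ᵐ[μ]
      (fun ω => ∑ e ∈ Finset.Icc 1 T,
        Set.indicator {ω' | E ω' = e} (fun ω' => g e * f ω') ω) := by
    filter_upwards [hae] with ω hω
    rw [Finset.sum_eq_single (E ω)]
    · simp [Set.indicator_apply]
    · intro e _ hne
      simp only [Set.indicator_apply, Set.mem_setOf_eq]
      rw [if_neg (fun h => hne h.symm)]
    · intro h
      exact absurd (Finset.mem_Icc.mpr hω) h
  rw [integral_congr_ae step,
    integral_finset_sum _ (fun e _ => ((hf.const_mul (g e)).indicator (hmeas e)))]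
  refine Finset.sum_congr rfl fun e _ => ?_
  rw [integral_indicator (hmeas e), integral_const_mul]

/-- Integral of a constant times a cohort indicator. -/
lemma int_ind {Ω : Type*} [MeasurableSpace Ω] (μ : Measure Ω)
    [IsProbabilityMeasure μ] (E : Ω → ℕ) (hE : Measurable E) (c : ℝ) (e : ℕ) :
    ∫ ω, c * (if E ω = e then (1:ℝ) else 0) ∂μ = c * (μ {ω | E ω = e}).toReal := by
  have h : (fun ω => c * (if E ω = e then (1:ℝ) else 0))
      = Set.indicator {ω | E ω = e} (fun _ => c) := by
    funext ω; by_cases h : E ω = e <;> simp [Set.indicator_apply, h]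
  have hm : MeasurableSet {ω | E ω = e} := hE (measurableSet_singleton e)
  rw [h, integral_indicator hm, setIntegral_const, smul_eq_mul, mul_comm]
  rfl

/-- The matrix `V_D := Σ_{t=0}^{T} E[D̈_t·D̈_tᵀ]`, indexed by the lag set `L`. -/
def VD {Ω : Type*} [MeasurableSpace Ω] (μ : Measure Ω) (T : ℕ) (E : Ω → ℕ)
    (L : Finset ℤ) : Matrix {x // x ∈ L} {x // x ∈ L} ℝ :=
  fun l l' => ∑ t ∈ Finset.range (T + 1),
    ∫ ω, ddotRel μ T E l.1 t ω * ddotRel μ T E l'.1 t ω ∂μ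

/-- The vector `c(e,l') := Σ_{t=0}^{T} E[D̈_t·1{E = e}·D^{l'}_t] ∈ ℝ^L`. -/
def cvec {Ω : Type*} [MeasurableSpace Ω] (μ : Measure Ω) (T : ℕ) (E : Ω → ℕ)
    (L : Finset ℤ) (e : ℕ) (l' : ℤ) : {x // x ∈ L} → ℝ :=
  fun l => ∑ t ∈ Finset.range (T + 1),
    ∫ ω, ddotRel μ T E l.1 t ω * ((if E ω = e then (1 : ℝ) else 0) * Drel E l' t ω) ∂μ

/-- The numerator vector `Σ_{t=0}^{T} E[D̈_t·Y_t] ∈ ℝ^L`. -/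
def bvec {Ω : Type*} [MeasurableSpace Ω] (μ : Measure Ω) (T : ℕ) (E : Ω → ℕ)
    (Ye : ℕ → ℕ → Ω → ℝ) (Yinf : ℕ → Ω → ℝ) (L : Finset ℤ) : {x // x ∈ L} → ℝ :=
  fun l => ∑ t ∈ Finset.range (T + 1),
    ∫ ω, ddotRel μ T E l.1 t ω * obsY T E Ye Yinf t ω ∂μ

/-- The dynamic fixed-effects estimand vector `μ := V_D⁻¹·Σ_t E[D̈_t·Y_t] ∈ ℝ^L`. -/
def muFE {Ω : Type*} [MeasurableSpace Ω] (μ : Measure Ω) (T : ℕ) (E : Ω → ℕ)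
    (Ye : ℕ → ℕ → Ω → ℝ) (Yinf : ℕ → Ω → ℝ) (L : Finset ℤ) : {x // x ∈ L} → ℝ :=
  Matrix.mulVec (VD μ T E L)⁻¹ (bvec μ T E Ye Yinf L)

/-- The weight `ω(l; e, l') := (V_D⁻¹·c(e,l'))_l`. -/
def omegaFE {Ω : Type*} [MeasurableSpace Ω] (μ : Measure Ω) (T : ℕ) (E : Ω → ℕ)
    (L : Finset ℤ) (l : {x // x ∈ L}) (e : ℕ) (l' : ℤ) : ℝ :=
  Matrix.mulVec (VD μ T E L)⁻¹ (cvec μ T E L e l') l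

/-- Numerator decomposition in the proof of Proposition 2: under PT and NA,
`Σ_t E[D̈_t·Y_t] = Σ_{e=1}^{T} Σ_{l'=0}^{T−e} CATT(e,l')·c(e,l')` as vectors in `ℝ^L`. -/
theorem dynamic_fe_numerator_decomposition
    {Ω : Type*} [MeasurableSpace Ω] (μ : Measure Ω) [IsProbabilityMeasure μ]
    (T : ℕ) (hT : 1 ≤ T)
    (E : Ω → ℕ) (hE : Measurable E)
    (hsupp : μ {ω | 1 ≤ E ω ∧ E ω ≤ T} = 1)
    (hpos : ∀ e ∈ Finset.Icc 1 T, 0 < μ {ω | E ω = e})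
    (Ye : ℕ → ℕ → Ω → ℝ) (Yinf : ℕ → Ω → ℝ)
    (hL2e : ∀ e ∈ Finset.Icc 1 T, ∀ t ≤ T, MemLp (Ye e t) 2 μ)
    (hL2inf : ∀ t ≤ T, MemLp (Yinf t) 2 μ)
    (hPT : PT μ T E Yinf) (hNA : NA μ T Ye Yinf)
    (L : Finset ℤ) (hL1 : L ⊆ Finset.Icc (-(T : ℤ)) ((T : ℤ) - 1))
    (hL2 : Finset.Icc (0 : ℤ) ((T : ℤ) - 1) ⊆ L) :
    ∀ l : {x // x ∈ L},
      bvec μ T E Ye Yinf L l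
        = ∑ e ∈ Finset.Icc 1 T, ∑ l' ∈ Finset.range (T - e + 1),
            CATT μ E Ye Yinf e (l' : ℤ) * cvec μ T E L e (l' : ℤ) l := by
  intro l
  classical
  have hmeasE : ∀ e : ℕ, MeasurableSet {ω | E ω = e} :=
    fun e => hE (measurableSet_singleton e)
  have hPpos : ∀ e ∈ Finset.Icc 1 T, 0 < (μ {ω | E ω = e}).toReal :=
    fun e he => ENNReal.toReal_pos (hpos e he).ne' (measure_ne_top μ _)
  have hInt_inf : ∀ t, t ≤ T → Integrable (Yinf t) μ :=
    fun t ht => (hL2inf t ht).integrable one_le_two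
  have hInt_e : ∀ e ∈ Finset.Icc 1 T, ∀ t, t ≤ T → Integrable (Ye e t) μ :=
    fun e he t ht => (hL2e e he t ht).integrable one_le_two
  have hIntY : ∀ t, t ≤ T → Integrable (obsY T E Ye Yinf t) μ := by
    intro t ht
    rw [show obsY T E Ye Yinf t = (fun ω => Yinf t ω + ∑ e ∈ Finset.Icc 1 T,
      (Ye e t ω - Yinf t ω) * (if E ω = e then (1:ℝ) else 0)) from rfl]
    refine Integrable.add (hInt_inf t ht) (integrable_finset_sum _ fun e he => ?_)
    have hfe : (fun ω => (Ye e t ω - Yinf t ω) * (if E ω = e then (1:ℝ) else 0))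
        = Set.indicator {ω | E ω = e} (fun ω => Ye e t ω - Yinf t ω) := by
      funext ω; by_cases h : E ω = e <;> simp [Set.indicator_apply, h]
    exact hfe ▸ (((hInt_e e he t ht).sub (hInt_inf t ht)).indicator (hmeasE e))
  -- LHS computation
  have hLHS : bvec μ T E Ye Yinf L l = ∑ t ∈ Finset.range (T+1), ∑ e ∈ Finset.Icc 1 T,
      Ddot μ T E l.1 t e *
        ((∫ ω in {ω' | E ω' = e}, (Ye e t ω - Yinf t ω) ∂μ)
          + ∫ ω in {ω' | E ω' = e}, Yinf t ω ∂μ) := by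
    simp only [bvec]
    refine Finset.sum_congr rfl fun t htmem => ?_
    have ht : t ≤ T := Nat.lt_succ_iff.mp (Finset.mem_range.mp htmem)
    have h1 : (fun ω => ddotRel μ T E l.1 t ω * obsY T E Ye Yinf t ω)
        = fun ω => Ddot μ T E l.1 t (E ω) * obsY T E Ye Yinf t ω := by
      funext ω; rw [ddot_eq]
    rw [h1, key_decomp μ T E hE hsupp _ _ (hIntY t ht)]
    refine Finset.sum_congr rfl fun e he => ?_
    congr 1
    have h2 : ∫ ω in {ω' | E ω' = e}, obsY T E Ye Yinf t ω ∂μ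
        = ∫ ω in {ω' | E ω' = e}, Ye e t ω ∂μ := by
      refine setIntegral_congr_fun (hmeasE e) fun ω hω => ?_
      have hωe : E ω = e := hω
      simp only [obsY]
      rw [Finset.sum_eq_single e
        (fun b _ hbe => by rw [if_neg (fun h => hbe (by rw [← h, hωe]))]; ring)
        (fun h => absurd he h)]
      rw [if_pos hωe]; ring
    have h3 : ∫ ω in {ω' | E ω' = e}, Ye e t ω ∂μ
        = ∫ ω in {ω' | E ω' = e}, ((Ye e t ω - Yinf t ω) + Yinf t ω) ∂μ :=
      setIntegral_congr_fun (hmeasE e) fun ω _ => by ring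
    have hint1 : IntegrableOn (fun ω => Ye e t ω - Yinf t ω) {ω' | E ω' = e} μ :=
      ((hInt_e e he t ht).sub (hInt_inf t ht)).integrableOn
    have hint2 : IntegrableOn (fun ω => Yinf t ω) {ω' | E ω' = e} μ :=
      (hInt_inf t ht).integrableOn
    rw [h2, h3]
    exact integral_add hint1 hint2
  -- cvec computation
  have hcvec : ∀ e ∈ Finset.Icc 1 T, ∀ l' : ℕ, l' ≤ T - e →
      cvec μ T E L e (l' : ℤ) l
        = Ddot μ T E l.1 (e + l') e * (μ {ω | E ω = e}).toReal := by
    intro e he l' hl'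
    have heT : e ≤ T := (Finset.mem_Icc.mp he).2
    simp only [cvec]
    have hterm : ∀ t : ℕ, (fun ω => ddotRel μ T E l.1 t ω *
        ((if E ω = e then (1:ℝ) else 0) * Drel E (l' : ℤ) t ω))
        = fun ω => (Ddot μ T E l.1 t e * (if (t:ℤ) - (e:ℤ) = (l':ℤ) then 1 else 0))
            * (if E ω = e then (1:ℝ) else 0) := by
      intro t; funext ω
      by_cases h : E ω = e
      · subst h; rw [ddot_eq]; simp [Drel]
      · simp [h]
    have hstep : ∀ t ∈ Finset.range (T+1), (∫ ω, ddotRel μ T E l.1 t ω *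
        ((if E ω = e then (1:ℝ) else 0) * Drel E (l' : ℤ) t ω) ∂μ)
        = (Ddot μ T E l.1 t e * (if (t:ℤ) - (e:ℤ) = (l':ℤ) then 1 else 0))
            * (μ {ω | E ω = e}).toReal :=
      fun t _ => by rw [hterm t, int_ind μ E hE]
    rw [Finset.sum_congr rfl hstep,
      Finset.sum_eq_single (e + l')
        (fun t _ hte => by
          rw [if_neg (fun hc => hte (by omega))]; ring)
        (fun h => absurd (Finset.mem_range.mpr (by omega)) h)]
    rw [if_pos (by push_cast; ring)]
    ring
  -- CATT · cvec
  have hCc : ∀ e ∈ Finset.Icc 1 T, ∀ l' : ℕ, l' ≤ T - e →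
      CATT μ E Ye Yinf e (l' : ℤ) * cvec μ T E L e (l' : ℤ) l
        = Ddot μ T E l.1 (e + l') e *
            ∫ ω in {ω' | E ω' = e}, (Ye e (e + l') ω - Yinf (e + l') ω) ∂μ := by
    intro e he l' hl'
    rw [hcvec e he l' hl']
    simp only [CATT, cexp]
    rw [show ((e:ℤ) + (l':ℤ)).toNat = e + l' by rw [← Nat.cast_add, Int.toNat_natCast]]
    field_simp [ne_of_gt (hPpos e he)]
  -- NA: pre-treatment treatment effects vanish
  have hNAz : ∀ e ∈ Finset.Icc 1 T, ∀ t < e,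
      ∫ ω in {ω' | E ω' = e}, (Ye e t ω - Yinf t ω) ∂μ = 0 := by
    intro e he t hte
    have h : (fun ω => Ye e t ω - Yinf t ω) =ᵐ[μ] (fun _ => (0:ℝ)) :=
      (hNA e he t hte).mono fun ω h => by simp [h]
    rw [integral_congr_ae (ae_restrict_of_ae h), integral_zero]
  -- extension over all periods
  have hext : ∀ e ∈ Finset.Icc 1 T,
      ∑ l' ∈ Finset.range (T - e + 1), Ddot μ T E l.1 (e + l') e *
          (∫ ω in {ω' | E ω' = e}, (Ye e (e + l') ω - Yinf (e + l') ω) ∂μ)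
      = ∑ t ∈ Finset.range (T + 1), Ddot μ T E l.1 t e *
          (∫ ω in {ω' | E ω' = e}, (Ye e t ω - Yinf t ω) ∂μ) := by
    intro e he
    have heT : e ≤ T := (Finset.mem_Icc.mp he).2
    rw [← Finset.sum_image (s := Finset.range (T - e + 1)) (g := fun l' => e + l')
      (f := fun t => Ddot μ T E l.1 t e *
        (∫ ω in {ω' | E ω' = e}, (Ye e t ω - Yinf t ω) ∂μ))
      (fun a _ b _ h => Nat.add_left_cancel h)]
    refine Finset.sum_subset (fun t htm => ?_) (fun t htm htn => ?_)
    · simp only [Finset.mem_image, Finset.mem_range] at htm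
      obtain ⟨a, ha, rfl⟩ := htm
      exact Finset.mem_range.mpr (by omega)
    · have hlt : t < e := by
        simp only [Finset.mem_image, Finset.mem_range] at htm htn
        by_contra hge
        push_neg at hge
        exact htn ⟨t - e, by omega, by omega⟩
      rw [hNAz e he t hlt, mul_zero]
  have hRHSe : ∀ e ∈ Finset.Icc 1 T,
      ∑ l' ∈ Finset.range (T - e + 1),
        CATT μ E Ye Yinf e (l' : ℤ) * cvec μ T E L e (l' : ℤ) l
      = ∑ t ∈ Finset.range (T + 1), Ddot μ T E l.1 t e *
          (∫ ω in {ω' | E ω' = e}, (Ye e t ω - Yinf t ω) ∂μ) := by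
    intro e he
    rw [Finset.sum_congr rfl (fun l' hl' =>
      hCc e he l' (Nat.lt_succ_iff.mp (Finset.mem_range.mp hl'))), hext e he]
  -- PT consequence
  have hBsplit : ∀ e ∈ Finset.Icc 1 T, ∀ t, t ≤ T →
      ∫ ω in {ω' | E ω' = e}, Yinf t ω ∂μ
        = (∫ ω in {ω' | E ω' = e}, Yinf 0 ω ∂μ)
          + (μ {ω | E ω = e}).toReal * ((∫ ω, Yinf t ω ∂μ) - ∫ ω, Yinf 0 ω ∂μ) := by
    intro e he t ht
    have h0 : (0:ℕ) ≤ T := Nat.zero_le T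
    have hpt := hPT e he 0 h0 t ht
    simp only [cexp] at hpt
    rw [div_eq_iff (ne_of_gt (hPpos e he)),
      integral_sub (hInt_inf t ht) (hInt_inf 0 h0),
      integral_sub ((hInt_inf t ht).integrableOn) ((hInt_inf 0 h0).integrableOn)] at hpt
    linarith [hpt]
  -- baseline part vanishes
  have hDdotP : ∀ t : ℕ, ∑ e ∈ Finset.Icc 1 T,
      (μ {ω | E ω = e}).toReal * Ddot μ T E l.1 t e = 0 := by
    intro t
    have hk := key_decomp μ T E hE hsupp (fun e => Ddot μ T E l.1 t e)
      (fun _ => (1:ℝ)) (integrable_const 1)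
    simp only [mul_one] at hk
    have hz : ∫ ω, Ddot μ T E l.1 t (E ω) ∂μ = 0 := by
      rw [show (fun ω => Ddot μ T E l.1 t (E ω)) = fun ω => ddotRel μ T E l.1 t ω from
        funext fun ω => (ddot_eq μ T E l.1 t ω).symm]
      exact ddotRel_integral μ T E hE l.1 t
    have hps : ∑ e ∈ Finset.Icc 1 T, (μ {ω | E ω = e}).toReal * Ddot μ T E l.1 t e
        = ∑ e ∈ Finset.Icc 1 T, Ddot μ T E l.1 t e
            * ∫ ω in {ω' | E ω' = e}, (1:ℝ) ∂μ := by
      refine Finset.sum_congr rfl fun e _ => ?_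
      rw [setIntegral_const, smul_eq_mul, mul_one, mul_comm]
      rfl
    rw [hps, ← hk, hz]
  have hzero : ∑ t ∈ Finset.range (T+1), ∑ e ∈ Finset.Icc 1 T,
      Ddot μ T E l.1 t e * ∫ ω in {ω' | E ω' = e}, Yinf t ω ∂μ = 0 := by
    have h1 : ∀ t ∈ Finset.range (T+1), ∑ e ∈ Finset.Icc 1 T,
        Ddot μ T E l.1 t e * ∫ ω in {ω' | E ω' = e}, Yinf t ω ∂μ
        = ∑ e ∈ Finset.Icc 1 T,
          ((Ddot μ T E l.1 t e * ∫ ω in {ω' | E ω' = e}, Yinf 0 ω ∂μ)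
            + ((μ {ω | E ω = e}).toReal * Ddot μ T E l.1 t e)
                * ((∫ ω, Yinf t ω ∂μ) - ∫ ω, Yinf 0 ω ∂μ)) := by
      intro t htm
      refine Finset.sum_congr rfl fun e he => ?_
      rw [hBsplit e he t (Nat.lt_succ_iff.mp (Finset.mem_range.mp htm))]
      ring
    rw [Finset.sum_congr rfl h1]
    simp only [Finset.sum_add_distrib]
    have h2 : ∑ t ∈ Finset.range (T+1), ∑ e ∈ Finset.Icc 1 T,
        Ddot μ T E l.1 t e * ∫ ω in {ω' | E ω' = e}, Yinf 0 ω ∂μ = 0 := by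
      rw [Finset.sum_comm]
      refine Finset.sum_eq_zero fun e _ => ?_
      rw [← Finset.sum_mul, Ddot_sum_time, zero_mul]
    have h3 : ∑ t ∈ Finset.range (T+1), ∑ e ∈ Finset.Icc 1 T,
        ((μ {ω | E ω = e}).toReal * Ddot μ T E l.1 t e)
          * ((∫ ω, Yinf t ω ∂μ) - ∫ ω, Yinf 0 ω ∂μ) = 0 := by
      refine Finset.sum_eq_zero fun t _ => ?_
      rw [← Finset.sum_mul, hDdotP t, zero_mul]
    rw [h2, h3, add_zero]
  -- assembly
  rw [hLHS, Finset.sum_congr rfl hRHSe]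
  have hcomm : ∑ e ∈ Finset.Icc 1 T, ∑ t ∈ Finset.range (T+1),
      Ddot μ T E l.1 t e * (∫ ω in {ω' | E ω' = e}, (Ye e t ω - Yinf t ω) ∂μ)
      = ∑ t ∈ Finset.range (T+1), ∑ e ∈ Finset.Icc 1 T,
      Ddot μ T E l.1 t e * (∫ ω in {ω' | E ω' = e}, (Ye e t ω - Yinf t ω) ∂μ) :=
    Finset.sum_comm
  rw [hcomm]
  simp only [mul_add, Finset.sum_add_distrib]
  rw [hzero, add_zero]


end
end

section
/- Assume parallel trends (PT) and no anticipation (NA), and assume V_D is invertible. Then for every l ∈ L, the dynamic fixed-effects estimand satisfies μ_l = Σ_{e=1}^{T} Σ_{l'=0}^{T−e} ω(l; e, l')·CATT(e,l'). In particular, each coefficient μ_l — including the lead coefficients with l < 0 — is a linear combination of post-treatment cohort-specific treatment effects CATT(e,l') with l' ≥ 0, and may load on CATTs from relative periods l' ≠ l. (Proposition 2, main decomposition.) -/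
open MeasureTheory Filter

noncomputable section

set_option linter.unusedSectionVars false
set_option linter.unusedVariables false

namespace AuxDFE

def dd0 (l : ℤ) (t e : ℕ) : ℝ := if (t : ℤ) - (e : ℤ) = l then 1 else 0

def Kc {Ω : Type*} [MeasurableSpace Ω] (μ : Measure Ω) (T : ℕ) (E : Ω → ℕ)
    (l : ℤ) (t e : ℕ) : ℝ :=
  dd0 l t e - (∫ ω', Drel E l t ω' ∂μ)
    - (1 / ((T : ℝ) + 1)) * ∑ s ∈ Finset.range (T + 1), dd0 l s e
    + (1 / ((T : ℝ) + 1)) * ∑ s ∈ Finset.range (T + 1), ∫ ω', Drel E l s ω' ∂μ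

variable {Ω : Type*} [MeasurableSpace Ω] (μ : Measure Ω) (T : ℕ) (E : Ω → ℕ)

lemma ddot_eq (l : ℤ) (t : ℕ) (ω : Ω) :
    ddotRel μ T E l t ω = Kc μ T E l t (E ω) := rfl

lemma ddot_eq_of (l : ℤ) (t e : ℕ) {ω : Ω} (h : E ω = e) :
    ddotRel μ T E l t ω = Kc μ T E l t e := by rw [ddot_eq, h]

lemma measurable_Drel (hE : Measurable E) (l : ℤ) (t : ℕ) : Measurable (Drel E l t) := by
  have : Drel E l t = (fun e : ℕ => dd0 l t e) ∘ E := rfl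
  rw [this]
  exact (measurable_from_top).comp hE

lemma measurable_ddot (hE : Measurable E) (l : ℤ) (t : ℕ) :
    Measurable (ddotRel μ T E l t) := by
  have : ddotRel μ T E l t = (fun e : ℕ => Kc μ T E l t e) ∘ E := rfl
  rw [this]
  exact (measurable_from_top).comp hE

lemma abs_Drel_le (l : ℤ) (t : ℕ) (ω : Ω) : ‖Drel E l t ω‖ ≤ 1 := by
  simp only [Drel, Real.norm_eq_abs]
  split <;> simp

lemma integrable_Drel [IsProbabilityMeasure μ] (hE : Measurable E) (l : ℤ) (t : ℕ) :
    Integrable (Drel E l t) μ := by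
  refine (integrable_const (1 : ℝ)).mono' ((measurable_Drel E hE l t).aestronglyMeasurable) ?_
  exact Eventually.of_forall (fun ω => by simpa using abs_Drel_le E l t ω)

lemma abs_ddot_le [IsProbabilityMeasure μ] (hE : Measurable E) (l : ℤ) (t : ℕ) (ω : Ω) :
    ‖ddotRel μ T E l t ω‖ ≤ 4 := by
  have hI : ∀ s : ℕ, ‖∫ ω', Drel E l s ω' ∂μ‖ ≤ 1 := by
    intro s
    calc ‖∫ ω', Drel E l s ω' ∂μ‖ ≤ 1 * (μ Set.univ).toReal :=
          norm_integral_le_of_norm_le_const (Eventually.of_forall (abs_Drel_le E l s))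
      _ = 1 := by simp
  have hsum : ∀ g : ℕ → ℝ, (∀ s, ‖g s‖ ≤ 1) →
      ‖(1 / ((T : ℝ) + 1)) * ∑ s ∈ Finset.range (T + 1), g s‖ ≤ 1 := by
    intro g hg
    rw [norm_mul]
    have h1 : ‖∑ s ∈ Finset.range (T + 1), g s‖ ≤ (T : ℝ) + 1 := by
      calc ‖∑ s ∈ Finset.range (T + 1), g s‖ ≤ ∑ s ∈ Finset.range (T + 1), ‖g s‖ :=
            norm_sum_le _ _
        _ ≤ ∑ s ∈ Finset.range (T + 1), 1 := Finset.sum_le_sum (fun s _ => hg s)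
        _ = (T : ℝ) + 1 := by simp
    have h2 : ‖(1 / ((T : ℝ) + 1))‖ = 1 / ((T : ℝ) + 1) := by
      rw [Real.norm_eq_abs, abs_of_pos]; positivity
    rw [h2]
    rw [div_mul_eq_mul_div, one_mul, div_le_one (by positivity)]
    exact h1
  have h1 := abs_Drel_le E l t ω
  have h2 := hI t
  have h3 := hsum (fun s => Drel E l s ω) (fun s => abs_Drel_le E l s ω)
  have h4 := hsum (fun s => ∫ ω', Drel E l s ω' ∂μ) hI
  unfold ddotRel
  calc ‖Drel E l t ω - (∫ ω', Drel E l t ω' ∂μ)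
        - (1 / ((T : ℝ) + 1)) * ∑ s ∈ Finset.range (T + 1), Drel E l s ω
        + (1 / ((T : ℝ) + 1)) * ∑ s ∈ Finset.range (T + 1), ∫ ω', Drel E l s ω' ∂μ‖
      ≤ ‖Drel E l t ω - (∫ ω', Drel E l t ω' ∂μ)
        - (1 / ((T : ℝ) + 1)) * ∑ s ∈ Finset.range (T + 1), Drel E l s ω‖
        + ‖(1 / ((T : ℝ) + 1)) * ∑ s ∈ Finset.range (T + 1), ∫ ω', Drel E l s ω' ∂μ‖ :=
        norm_add_le _ _
    _ ≤ (‖Drel E l t ω - (∫ ω', Drel E l t ω' ∂μ)‖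
        + ‖(1 / ((T : ℝ) + 1)) * ∑ s ∈ Finset.range (T + 1), Drel E l s ω‖) + 1 := by
        gcongr; exact norm_sub_le _ _
    _ ≤ ((‖Drel E l t ω‖ + ‖∫ ω', Drel E l t ω' ∂μ‖) + 1) + 1 := by
        gcongr; exact norm_sub_le _ _
    _ ≤ ((1 + 1) + 1) + 1 := by gcongr
    _ = 4 := by norm_num

lemma integrable_ddot_mul [IsProbabilityMeasure μ] (hE : Measurable E) (l : ℤ) (t : ℕ)
    {g : Ω → ℝ} (hg : Integrable g μ) :
    Integrable (fun ω => ddotRel μ T E l t ω * g ω) μ :=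
  hg.bdd_mul ((measurable_ddot μ T E hE l t).aestronglyMeasurable)
    (Eventually.of_forall (abs_ddot_le μ T E hE l t))

lemma sum_Kc_zero (l : ℤ) (e : ℕ) :
    ∑ t ∈ Finset.range (T + 1), Kc μ T E l t e = 0 := by
  have hT1 : ((T : ℝ) + 1) ≠ 0 := by positivity
  simp only [Kc, Finset.sum_add_distrib, Finset.sum_sub_distrib, Finset.sum_const,
    Finset.card_range, nsmul_eq_mul]
  push_cast
  field_simp
  ring

variable [IsProbabilityMeasure μ]

lemma measSet_eq (hE : Measurable E) (e : ℕ) : MeasurableSet {ω | E ω = e} :=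
  hE (measurableSet_singleton e)

lemma part (hE : Measurable E) (hsupp : μ {ω | 1 ≤ E ω ∧ E ω ≤ T} = 1)
    {g : Ω → ℝ} (hg : Integrable g μ) :
    ∫ ω, g ω ∂μ = ∑ e ∈ Finset.Icc 1 T, ∫ ω in {ω | E ω = e}, g ω ∂μ := by
  have hU : {ω | 1 ≤ E ω ∧ E ω ≤ T} = ⋃ e ∈ Finset.Icc 1 T, {ω | E ω = e} := by
    ext ω
    simp only [Set.mem_setOf_eq, Set.mem_iUnion, Finset.mem_Icc]
    exact ⟨fun ⟨h1, h2⟩ => ⟨E ω, ⟨h1, h2⟩, rfl⟩, fun ⟨e, ⟨h1, h2⟩, he⟩ => by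
      rw [he]; exact ⟨h1, h2⟩⟩
  have hSm : MeasurableSet {ω | 1 ≤ E ω ∧ E ω ≤ T} := by
    rw [hU]
    exact MeasurableSet.biUnion (Finset.Icc 1 T).countable_toSet
      (fun e _ => measSet_eq E hE e)
  have hcompl : μ ({ω | 1 ≤ E ω ∧ E ω ≤ T}ᶜ) = 0 := by
    rw [measure_compl hSm (measure_ne_top μ _), hsupp, measure_univ, tsub_self]
  have hae : {ω | 1 ≤ E ω ∧ E ω ≤ T} =ᵐ[μ] (Set.univ : Set Ω) :=
    Filter.eventuallyEq_univ.2 (compl_compl {ω | 1 ≤ E ω ∧ E ω ≤ T} ▸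
      (measure_eq_zero_iff_ae_notMem.1 hcompl).mono (fun ω h => by simpa using h))
  have h1 : ∫ ω, g ω ∂μ = ∫ ω in {ω | 1 ≤ E ω ∧ E ω ≤ T}, g ω ∂μ := by
    rw [setIntegral_congr_set hae, setIntegral_univ]
  rw [h1, hU]
  refine integral_biUnion_finset _ (fun e _ => measSet_eq E hE e) ?_
    (fun e _ => hg.integrableOn)
  intro a _ b _ hab
  simp only [Function.onFun, Set.disjoint_left, Set.mem_setOf_eq]
  intro ω h1 h2
  exact hab (h1 ▸ h2 ▸ rfl)

lemma setInt_Drel (hE : Measurable E) (l : ℤ) (t e : ℕ) :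
    ∫ ω in {ω | E ω = e}, Drel E l t ω ∂μ = dd0 l t e * (μ {ω | E ω = e}).toReal := by
  rw [setIntegral_congr_fun (g := fun _ => dd0 l t e) (measSet_eq E hE e)
    (fun ω (hω : E ω = e) => by simp only [Drel, dd0, hω])]
  rw [setIntegral_const, smul_eq_mul, mul_comm, measureReal_def]

lemma int_Drel_eq (hE : Measurable E) (hsupp : μ {ω | 1 ≤ E ω ∧ E ω ≤ T} = 1)
    (l : ℤ) (t : ℕ) :
    ∫ ω, Drel E l t ω ∂μ
      = ∑ e ∈ Finset.Icc 1 T, dd0 l t e * (μ {ω | E ω = e}).toReal := by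
  rw [part μ T E hE hsupp (integrable_Drel μ E hE l t)]
  exact Finset.sum_congr rfl (fun e _ => setInt_Drel μ E hE l t e)

lemma sum_p_one (hE : Measurable E) (hsupp : μ {ω | 1 ≤ E ω ∧ E ω ≤ T} = 1) :
    ∑ e ∈ Finset.Icc 1 T, (μ {ω | E ω = e}).toReal = 1 := by
  have := part μ T E hE hsupp (g := fun _ => (1 : ℝ)) (integrable_const 1)
  simp only [integral_const, measure_univ, ENNReal.toReal_one, measureReal_def, one_smul, smul_eq_mul,
    mul_one, Measure.restrict_apply_univ] at this
  exact this.symm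

lemma sum_Kc_p_zero (hE : Measurable E) (hsupp : μ {ω | 1 ≤ E ω ∧ E ω ≤ T} = 1)
    (l : ℤ) (t : ℕ) :
    ∑ e ∈ Finset.Icc 1 T, Kc μ T E l t e * (μ {ω | E ω = e}).toReal = 0 := by
  have hp1 := sum_p_one μ T E hE hsupp
  have hD := fun s => (int_Drel_eq μ T E hE hsupp l s).symm
  simp only [Kc, sub_mul, add_mul, Finset.sum_sub_distrib, Finset.sum_add_distrib]
  rw [hD t]
  rw [← Finset.mul_sum, hp1, mul_one]
  have h3 : ∑ e ∈ Finset.Icc 1 T,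
      (1 / ((T : ℝ) + 1) * ∑ s ∈ Finset.range (T + 1), dd0 l s e)
        * (μ {ω | E ω = e}).toReal
      = 1 / ((T : ℝ) + 1) * ∑ s ∈ Finset.range (T + 1), ∫ ω', Drel E l s ω' ∂μ := by
    have : ∀ e ∈ Finset.Icc 1 T,
        (1 / ((T : ℝ) + 1) * ∑ s ∈ Finset.range (T + 1), dd0 l s e)
          * (μ {ω | E ω = e}).toReal
        = 1 / ((T : ℝ) + 1) * ∑ s ∈ Finset.range (T + 1),
            dd0 l s e * (μ {ω | E ω = e}).toReal := by
      intro e _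
      rw [Finset.mul_sum, Finset.mul_sum, Finset.sum_mul]
      exact Finset.sum_congr rfl (fun s _ => by ring)
    rw [Finset.sum_congr rfl this, ← Finset.mul_sum, Finset.sum_comm]
    congr 1
    exact Finset.sum_congr rfl (fun s _ => hD s)
  rw [h3, ← Finset.mul_sum, hp1, mul_one]
  ring

lemma setInt_ddot_mul (hE : Measurable E) (l : ℤ) (t e : ℕ) (g : Ω → ℝ) :
    ∫ ω in {ω | E ω = e}, ddotRel μ T E l t ω * g ω ∂μ
      = Kc μ T E l t e * ∫ ω in {ω | E ω = e}, g ω ∂μ := by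
  rw [setIntegral_congr_fun (g := fun ω => Kc μ T E l t e * g ω) (measSet_eq E hE e)
    (fun ω (hω : E ω = e) => by rw [ddot_eq_of μ T E l t e hω])]
  exact integral_const_mul _ _

lemma ind_factor (e : ℕ) (f : Ω → ℝ) :
    (fun ω => f ω * (if E ω = e then (1:ℝ) else 0))
      = Set.indicator {ω | E ω = e} f := by
  funext ω
  by_cases h : E ω = e <;>
    simp [Set.indicator_apply, Set.mem_setOf_eq, h]

lemma int_ddot_ind (hE : Measurable E) (l : ℤ) (t e : ℕ) :
    ∫ ω, ddotRel μ T E l t ω * (if E ω = e then (1:ℝ) else 0) ∂μ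
      = Kc μ T E l t e * (μ {ω | E ω = e}).toReal := by
  rw [ind_factor E e (ddotRel μ T E l t), integral_indicator (measSet_eq E hE e)]
  rw [setIntegral_congr_fun (g := fun _ => Kc μ T E l t e) (measSet_eq E hE e)
    (fun ω (hω : E ω = e) => ddot_eq_of μ T E l t e hω)]
  rw [setIntegral_const, smul_eq_mul, mul_comm, measureReal_def]

lemma partA (hE : Measurable E) (hsupp : μ {ω | 1 ≤ E ω ∧ E ω ≤ T} = 1)
    (Yinf : ℕ → Ω → ℝ) (hL2inf : ∀ t ≤ T, MemLp (Yinf t) 2 μ)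
    (hPT : PT μ T E Yinf)
    (hpos : ∀ e ∈ Finset.Icc 1 T, 0 < μ {ω | E ω = e}) (l : ℤ) :
    ∑ t ∈ Finset.range (T + 1), ∫ ω, ddotRel μ T E l t ω * Yinf t ω ∂μ = 0 := by
  have hint : ∀ t, t ≤ T → Integrable (Yinf t) μ :=
    fun t ht => (hL2inf t ht).integrable one_le_two
  have hpne : ∀ e ∈ Finset.Icc 1 T, (μ {ω | E ω = e}).toReal ≠ 0 :=
    fun e he => (ENNReal.toReal_pos (hpos e he).ne' (measure_ne_top μ _)).ne'
  have hA : ∀ e ∈ Finset.Icc 1 T, ∀ t ≤ T,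
      ∫ ω in {ω | E ω = e}, Yinf t ω ∂μ
        = (μ {ω | E ω = e}).toReal * (∫ ω, Yinf t ω ∂μ)
          + ((∫ ω in {ω | E ω = e}, Yinf 0 ω ∂μ)
            - (μ {ω | E ω = e}).toReal * (∫ ω, Yinf 0 ω ∂μ)) := by
    intro e he t ht
    have hpt := hPT e he 0 (Nat.zero_le T) t ht
    unfold cexp at hpt
    rw [div_eq_iff (hpne e he)] at hpt
    rw [integral_sub ((hint t ht).integrableOn) ((hint 0 (Nat.zero_le T)).integrableOn)] at hpt
    rw [integral_sub (hint t ht) (hint 0 (Nat.zero_le T))] at hpt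
    have := hpt
    ring_nf
    ring_nf at this
    linarith
  have step1 : ∀ t ∈ Finset.range (T + 1),
      ∫ ω, ddotRel μ T E l t ω * Yinf t ω ∂μ
        = ∑ e ∈ Finset.Icc 1 T, Kc μ T E l t e
            * ((μ {ω | E ω = e}).toReal * (∫ ω, Yinf t ω ∂μ)
              + ((∫ ω in {ω | E ω = e}, Yinf 0 ω ∂μ)
                - (μ {ω | E ω = e}).toReal * (∫ ω, Yinf 0 ω ∂μ))) := by
    intro t ht
    rw [Finset.mem_range] at ht
    have ht' : t ≤ T := Nat.lt_succ_iff.1 ht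
    rw [part μ T E hE hsupp (integrable_ddot_mul μ T E hE l t (hint t ht'))]
    refine Finset.sum_congr rfl (fun e he => ?_)
    rw [setInt_ddot_mul μ T E hE l t e, hA e he t ht']
  rw [Finset.sum_congr rfl step1]
  simp only [mul_add, Finset.sum_add_distrib]
  have hfirst : ∀ t ∈ Finset.range (T + 1),
      ∑ e ∈ Finset.Icc 1 T, Kc μ T E l t e
        * ((μ {ω | E ω = e}).toReal * (∫ ω, Yinf t ω ∂μ)) = 0 := by
    intro t _
    have : ∑ e ∈ Finset.Icc 1 T, Kc μ T E l t e
        * ((μ {ω | E ω = e}).toReal * (∫ ω, Yinf t ω ∂μ))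
        = (∑ e ∈ Finset.Icc 1 T, Kc μ T E l t e * (μ {ω | E ω = e}).toReal)
          * (∫ ω, Yinf t ω ∂μ) := by
      rw [Finset.sum_mul]
      exact Finset.sum_congr rfl (fun e _ => by ring)
    rw [this, sum_Kc_p_zero μ T E hE hsupp, zero_mul]
  have hsecond : ∑ t ∈ Finset.range (T + 1), ∑ e ∈ Finset.Icc 1 T,
      Kc μ T E l t e * ((∫ ω in {ω | E ω = e}, Yinf 0 ω ∂μ)
        - (μ {ω | E ω = e}).toReal * (∫ ω, Yinf 0 ω ∂μ)) = 0 := by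
    rw [Finset.sum_comm]
    refine Finset.sum_eq_zero (fun e _ => ?_)
    rw [← Finset.sum_mul, sum_Kc_zero μ T E, zero_mul]
  rw [Finset.sum_congr rfl hfirst, hsecond, Finset.sum_const_zero, zero_add]

lemma cvec_eq (hE : Measurable E) (L : Finset ℤ) (e : ℕ) (he : e ∈ Finset.Icc 1 T)
    (l' : ℕ) (hl' : l' ≤ T - e) (lsub : {x // x ∈ L}) :
    cvec μ T E L e (l' : ℤ) lsub
      = Kc μ T E lsub.1 (e + l') e * (μ {ω | E ω = e}).toReal := by
  obtain ⟨he1, he2⟩ := Finset.mem_Icc.1 he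
  have helT : e + l' ≤ T := by omega
  unfold cvec
  have hpt : ∀ t : ℕ, (fun ω => ddotRel μ T E lsub.1 t ω
        * ((if E ω = e then (1:ℝ) else 0) * Drel E (l' : ℤ) t ω))
      = fun ω => (if t = e + l' then (1:ℝ) else 0)
        * (ddotRel μ T E lsub.1 t ω * (if E ω = e then (1:ℝ) else 0)) := by
    intro t
    funext ω
    by_cases h : E ω = e
    · by_cases h2 : t = e + l'
      · have h3 : ((t : ℤ) - (e : ℤ) = (l' : ℤ)) := by omega
        simp [Drel, h, h2, h3]
      · have h3 : ¬ ((t : ℤ) - (e : ℤ) = (l' : ℤ)) := by omega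
        simp [Drel, h, h2, h3]
    · simp [h]
  have hint : ∀ t ∈ Finset.range (T + 1),
      ∫ ω, ddotRel μ T E lsub.1 t ω
        * ((if E ω = e then (1:ℝ) else 0) * Drel E (l' : ℤ) t ω) ∂μ
      = if t = e + l'
        then ∫ ω, ddotRel μ T E lsub.1 t ω * (if E ω = e then (1:ℝ) else 0) ∂μ
        else 0 := by
    intro t _
    rw [hpt t]
    rw [integral_const_mul]
    by_cases h2 : t = e + l' <;> simp [h2]
  rw [Finset.sum_congr rfl hint]
  have := Finset.sum_ite_eq' (Finset.range (T + 1)) (e + l')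
    (fun t => ∫ ω, ddotRel μ T E lsub.1 t ω * (if E ω = e then (1:ℝ) else 0) ∂μ)
  rw [this, if_pos (Finset.mem_range.2 (by omega))]
  exact int_ddot_ind μ T E hE lsub.1 (e + l') e

lemma partB (hE : Measurable E) (hsupp : μ {ω | 1 ≤ E ω ∧ E ω ≤ T} = 1)
    (hpos : ∀ e ∈ Finset.Icc 1 T, 0 < μ {ω | E ω = e})
    (Ye : ℕ → ℕ → Ω → ℝ) (Yinf : ℕ → Ω → ℝ)
    (hNA : NA μ T Ye Yinf) (L : Finset ℤ)
    (e : ℕ) (he : e ∈ Finset.Icc 1 T) (lsub : {x // x ∈ L}) :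
    ∑ t ∈ Finset.range (T + 1),
        ∫ ω, ddotRel μ T E lsub.1 t ω
          * ((Ye e t ω - Yinf t ω) * (if E ω = e then (1:ℝ) else 0)) ∂μ
      = ∑ l' ∈ Finset.range (T - e + 1),
          CATT μ E Ye Yinf e (l' : ℤ) * cvec μ T E L e (l' : ℤ) lsub := by
  obtain ⟨he1, he2⟩ := Finset.mem_Icc.1 he
  set p : ℝ := (μ {ω | E ω = e}).toReal with hp
  have hpne : p ≠ 0 :=
    (ENNReal.toReal_pos (hpos e he).ne' (measure_ne_top μ _)).ne'
  have hterm : ∀ t ∈ Finset.range (T + 1),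
      ∫ ω, ddotRel μ T E lsub.1 t ω
          * ((Ye e t ω - Yinf t ω) * (if E ω = e then (1:ℝ) else 0)) ∂μ
        = if e ≤ t
          then CATT μ E Ye Yinf e ((t - e : ℕ) : ℤ) * (Kc μ T E lsub.1 t e * p)
          else 0 := by
    intro t ht
    by_cases hte : e ≤ t
    · rw [if_pos hte]
      have hfac : (fun ω => ddotRel μ T E lsub.1 t ω
            * ((Ye e t ω - Yinf t ω) * (if E ω = e then (1:ℝ) else 0)))
          = Set.indicator {ω | E ω = e}
              (fun ω => ddotRel μ T E lsub.1 t ω * (Ye e t ω - Yinf t ω)) := by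
        rw [← ind_factor E e (fun ω => ddotRel μ T E lsub.1 t ω * (Ye e t ω - Yinf t ω))]
        funext ω
        ring
      rw [hfac, integral_indicator (measSet_eq E hE e),
        setInt_ddot_mul μ T E hE lsub.1 t e]
      have hC : CATT μ E Ye Yinf e ((t - e : ℕ) : ℤ)
          = (∫ ω in {ω | E ω = e}, (Ye e t ω - Yinf t ω) ∂μ) / p := by
        have hto : ((e : ℤ) + ((t - e : ℕ) : ℤ)).toNat = t := by omega
        simp only [CATT, cexp, hto, hp]
      rw [hC]
      field_simp
    · rw [if_neg hte]
      push_neg at hte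
      have hna := hNA e he t hte
      have : (fun ω => ddotRel μ T E lsub.1 t ω
            * ((Ye e t ω - Yinf t ω) * (if E ω = e then (1:ℝ) else 0)))
          =ᵐ[μ] (fun _ => (0 : ℝ)) := by
        filter_upwards [hna] with ω hω
        rw [hω]
        ring
      rw [integral_congr_ae this, integral_zero]
  rw [Finset.sum_congr rfl hterm]
  have hsplit : ∑ t ∈ Finset.range (T + 1),
      (if e ≤ t
        then CATT μ E Ye Yinf e ((t - e : ℕ) : ℤ) * (Kc μ T E lsub.1 t e * p)
        else 0)
      = ∑ t ∈ Finset.Icc e T,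
          CATT μ E Ye Yinf e ((t - e : ℕ) : ℤ) * (Kc μ T E lsub.1 t e * p) := by
    have hsub : Finset.Icc e T ⊆ Finset.range (T + 1) := by
      intro t ht; rw [Finset.mem_Icc] at ht; exact Finset.mem_range.2 (by omega)
    have hzero : ∀ t ∈ Finset.range (T + 1), t ∉ Finset.Icc e T →
        (if e ≤ t
          then CATT μ E Ye Yinf e ((t - e : ℕ) : ℤ) * (Kc μ T E lsub.1 t e * p)
          else 0) = 0 := by
      intro t ht hnt
      rw [Finset.mem_range] at ht
      rw [Finset.mem_Icc] at hnt
      rw [if_neg (by omega)]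
    rw [← Finset.sum_subset hsub hzero]
    refine Finset.sum_congr rfl (fun t ht => ?_)
    rw [Finset.mem_Icc] at ht
    rw [if_pos ht.1]
  rw [hsplit]
  refine Finset.sum_nbij' (i := fun t => t - e) (j := fun l' => e + l') ?_ ?_ ?_ ?_ ?_
  · intro t ht; rw [Finset.mem_Icc] at ht; exact Finset.mem_range.2 (by omega)
  · intro l' hl'; rw [Finset.mem_range] at hl'; rw [Finset.mem_Icc]; omega
  · intro t ht; rw [Finset.mem_Icc] at ht; omega
  · intro l' hl'; rw [Finset.mem_range] at hl'; omega
  · intro t ht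
    rw [Finset.mem_Icc] at ht
    rw [cvec_eq μ T E hE L e he (t - e) (by omega) lsub]
    have h4 : e + (t - e) = t := by omega
    rw [h4]

lemma bvec_eq (hE : Measurable E) (hsupp : μ {ω | 1 ≤ E ω ∧ E ω ≤ T} = 1)
    (hpos : ∀ e ∈ Finset.Icc 1 T, 0 < μ {ω | E ω = e})
    (Ye : ℕ → ℕ → Ω → ℝ) (Yinf : ℕ → Ω → ℝ)
    (hL2e : ∀ e ∈ Finset.Icc 1 T, ∀ t ≤ T, MemLp (Ye e t) 2 μ)
    (hL2inf : ∀ t ≤ T, MemLp (Yinf t) 2 μ)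
    (hPT : PT μ T E Yinf) (hNA : NA μ T Ye Yinf)
    (L : Finset ℤ) (lsub : {x // x ∈ L}) :
    bvec μ T E Ye Yinf L lsub
      = ∑ e ∈ Finset.Icc 1 T, ∑ l' ∈ Finset.range (T - e + 1),
          CATT μ E Ye Yinf e (l' : ℤ) * cvec μ T E L e (l' : ℤ) lsub := by
  have hintinf : ∀ t, t ≤ T → Integrable (Yinf t) μ :=
    fun t ht => (hL2inf t ht).integrable one_le_two
  have hinte : ∀ e ∈ Finset.Icc 1 T, ∀ t, t ≤ T → Integrable (Ye e t) μ :=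
    fun e he t ht => (hL2e e he t ht).integrable one_le_two
  have hI2 : ∀ e ∈ Finset.Icc 1 T, ∀ t, t ≤ T →
      Integrable (fun ω => (Ye e t ω - Yinf t ω) * (if E ω = e then (1:ℝ) else 0)) μ := by
    intro e he t ht
    rw [ind_factor E e (fun ω => Ye e t ω - Yinf t ω)]
    exact ((hinte e he t ht).sub (hintinf t ht)).indicator (measSet_eq E hE e)
  have hstep : ∀ t ∈ Finset.range (T + 1),
      ∫ ω, ddotRel μ T E lsub.1 t ω * obsY T E Ye Yinf t ω ∂μ
        = (∫ ω, ddotRel μ T E lsub.1 t ω * Yinf t ω ∂μ)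
          + ∑ e ∈ Finset.Icc 1 T,
              ∫ ω, ddotRel μ T E lsub.1 t ω
                * ((Ye e t ω - Yinf t ω) * (if E ω = e then (1:ℝ) else 0)) ∂μ := by
    intro t ht
    rw [Finset.mem_range] at ht
    have ht' : t ≤ T := by omega
    have heq : (fun ω => ddotRel μ T E lsub.1 t ω * obsY T E Ye Yinf t ω)
        = fun ω => ddotRel μ T E lsub.1 t ω * Yinf t ω
          + ∑ e ∈ Finset.Icc 1 T, ddotRel μ T E lsub.1 t ω
              * ((Ye e t ω - Yinf t ω) * (if E ω = e then (1:ℝ) else 0)) := by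
      funext ω
      simp only [obsY, mul_add, Finset.mul_sum]
    rw [heq, integral_add (integrable_ddot_mul μ T E hE lsub.1 t (hintinf t ht'))
        (integrable_finset_sum _
          (fun e he => integrable_ddot_mul μ T E hE lsub.1 t (hI2 e he t ht'))),
      integral_finset_sum _
        (fun e he => integrable_ddot_mul μ T E hE lsub.1 t (hI2 e he t ht'))]
  unfold bvec
  rw [Finset.sum_congr rfl hstep, Finset.sum_add_distrib,
    partA μ T E hE hsupp Yinf hL2inf hPT hpos lsub.1, zero_add, Finset.sum_comm]
  exact Finset.sum_congr rfl (fun e he => partB μ T E hE hsupp hpos Ye Yinf hNA L e he lsub)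

end AuxDFE

/-- Proposition 2 (main decomposition): under PT and NA, with `V_D` invertible, each dynamic
fixed-effects coefficient `μ_l` is a linear combination of post-treatment `CATT(e,l')`'s. -/
theorem dynamic_fe_estimand_decomposition
    {Ω : Type*} [MeasurableSpace Ω] (μ : Measure Ω) [IsProbabilityMeasure μ]
    (T : ℕ) (hT : 1 ≤ T)
    (E : Ω → ℕ) (hE : Measurable E)
    (hsupp : μ {ω | 1 ≤ E ω ∧ E ω ≤ T} = 1)
    (hpos : ∀ e ∈ Finset.Icc 1 T, 0 < μ {ω | E ω = e})
    (Ye : ℕ → ℕ → Ω → ℝ) (Yinf : ℕ → Ω → ℝ)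
    (hL2e : ∀ e ∈ Finset.Icc 1 T, ∀ t ≤ T, MemLp (Ye e t) 2 μ)
    (hL2inf : ∀ t ≤ T, MemLp (Yinf t) 2 μ)
    (hPT : PT μ T E Yinf) (hNA : NA μ T Ye Yinf)
    (L : Finset ℤ) (hL1 : L ⊆ Finset.Icc (-(T : ℤ)) ((T : ℤ) - 1))
    (hL2 : Finset.Icc (0 : ℤ) ((T : ℤ) - 1) ⊆ L)
    (hVD : IsUnit (VD μ T E L).det) :
    ∀ l : {x // x ∈ L},
      muFE μ T E Ye Yinf L l
        = ∑ e ∈ Finset.Icc 1 T, ∑ l' ∈ Finset.range (T - e + 1),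
            omegaFE μ T E L l e (l' : ℤ) * CATT μ E Ye Yinf e (l' : ℤ) := by
  intro l
  have key := fun j => AuxDFE.bvec_eq μ T E hE hsupp hpos Ye Yinf hL2e hL2inf hPT hNA L j
  simp only [muFE, omegaFE, Matrix.mulVec, dotProduct]
  calc ∑ j, (VD μ T E L)⁻¹ l j * bvec μ T E Ye Yinf L j
      = ∑ j, (VD μ T E L)⁻¹ l j * ∑ e ∈ Finset.Icc 1 T, ∑ l' ∈ Finset.range (T - e + 1),
          CATT μ E Ye Yinf e (l' : ℤ) * cvec μ T E L e (l' : ℤ) j :=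
        Finset.sum_congr rfl (fun j _ => by rw [key j])
    _ = ∑ j, ∑ e ∈ Finset.Icc 1 T, ∑ l' ∈ Finset.range (T - e + 1),
          (VD μ T E L)⁻¹ l j
            * (CATT μ E Ye Yinf e (l' : ℤ) * cvec μ T E L e (l' : ℤ) j) := by
        simp only [Finset.mul_sum]
    _ = ∑ e ∈ Finset.Icc 1 T, ∑ j, ∑ l' ∈ Finset.range (T - e + 1),
          (VD μ T E L)⁻¹ l j
            * (CATT μ E Ye Yinf e (l' : ℤ) * cvec μ T E L e (l' : ℤ) j) :=
        Finset.sum_comm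
    _ = ∑ e ∈ Finset.Icc 1 T, ∑ l' ∈ Finset.range (T - e + 1), ∑ j,
          (VD μ T E L)⁻¹ l j
            * (CATT μ E Ye Yinf e (l' : ℤ) * cvec μ T E L e (l' : ℤ) j) :=
        Finset.sum_congr rfl (fun e _ => Finset.sum_comm)
    _ = ∑ e ∈ Finset.Icc 1 T, ∑ l' ∈ Finset.range (T - e + 1),
          (∑ j, (VD μ T E L)⁻¹ l j * cvec μ T E L e (l' : ℤ) j)
            * CATT μ E Ye Yinf e (l' : ℤ) := by
        refine Finset.sum_congr rfl (fun e _ => Finset.sum_congr rfl (fun l' _ => ?_))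
        rw [Finset.sum_mul]
        exact Finset.sum_congr rfl (fun j _ => by ring)


end
end

section
/- Assume V_D is invertible. Then for all l, l' ∈ L, the weights in the dynamic fixed-effects decomposition satisfy Σ_{e=1}^{T} ω(l; e, l') = 1 if l = l' and Σ_{e=1}^{T} ω(l; e, l') = 0 if l ≠ l'. (Weight-sum claims of Proposition 2: summed over cohorts, the own-period weights sum to one and the other-period weights sum to zero; no parallel trends or no anticipation assumption is needed.) -/
open MeasureTheory Filter

noncomputable section

section AuxWeights

variable {Ω : Type*} [MeasurableSpace Ω] (μ : Measure Ω) [IsProbabilityMeasure μ]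
variable {E : Ω → ℕ}

lemma measurable_Drel (hE : Measurable E) (l : ℤ) (t : ℕ) : Measurable (Drel E l t) := by
  unfold Drel
  exact Measurable.ite (hE (show MeasurableSet {n : ℕ | (t : ℤ) - (n : ℤ) = l} from trivial))
    measurable_const measurable_const

lemma abs_Drel_le (l : ℤ) (t : ℕ) (ω : Ω) : |Drel E l t ω| ≤ 1 := by
  unfold Drel; split <;> simp

lemma integrable_Drel (hE : Measurable E) (l : ℤ) (t : ℕ) : Integrable (Drel E l t) μ :=
  ⟨(measurable_Drel hE l t).aestronglyMeasurable,
    HasFiniteIntegral.of_bounded (C := 1)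
      (Filter.Eventually.of_forall fun ω => by
        simpa [Real.norm_eq_abs] using abs_Drel_le (E := E) l t ω)⟩

lemma abs_int_Drel_le (hE : Measurable E) (l : ℤ) (t : ℕ) :
    |∫ ω, Drel E l t ω ∂μ| ≤ 1 := by
  have := norm_integral_le_of_norm_le_const (μ := μ) (f := Drel E l t) (C := 1)
    (Filter.Eventually.of_forall fun ω => by
      simpa [Real.norm_eq_abs] using abs_Drel_le (E := E) l t ω)
  simpa [Real.norm_eq_abs] using this

lemma measurable_ddot (hE : Measurable E) (T : ℕ) (l : ℤ) (t : ℕ) :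
    Measurable (ddotRel μ T E l t) := by
  unfold ddotRel
  exact (((measurable_Drel hE l t).sub measurable_const).sub
    (measurable_const.mul (Finset.measurable_sum _ fun s _ => measurable_Drel hE l s))).add
    measurable_const

lemma abs_ddot_le (hE : Measurable E) (T : ℕ) (l : ℤ) (t : ℕ) (ω : Ω) :
    |ddotRel μ T E l t ω| ≤ 4 := by
  have hTpos : (0 : ℝ) < (T : ℝ) + 1 := by positivity
  have hA := abs_Drel_le (E := E) l t ω
  have hB := abs_int_Drel_le μ hE l t
  have hsum : |∑ s ∈ Finset.range (T + 1), Drel E l s ω| ≤ (T : ℝ) + 1 := by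
    calc |∑ s ∈ Finset.range (T + 1), Drel E l s ω|
        ≤ ∑ s ∈ Finset.range (T + 1), |Drel E l s ω| := Finset.abs_sum_le_sum_abs _ _
      _ ≤ ∑ s ∈ Finset.range (T + 1), 1 := Finset.sum_le_sum fun s _ => abs_Drel_le l s ω
      _ = (T : ℝ) + 1 := by simp
  have hsum' : |∑ s ∈ Finset.range (T + 1), ∫ ω', Drel E l s ω' ∂μ| ≤ (T : ℝ) + 1 := by
    calc |∑ s ∈ Finset.range (T + 1), ∫ ω', Drel E l s ω' ∂μ|
        ≤ ∑ s ∈ Finset.range (T + 1), |∫ ω', Drel E l s ω' ∂μ| := Finset.abs_sum_le_sum_abs _ _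
      _ ≤ ∑ s ∈ Finset.range (T + 1), 1 := Finset.sum_le_sum fun s _ => abs_int_Drel_le μ hE l s
      _ = (T : ℝ) + 1 := by simp
  have hC : |(1 / ((T : ℝ) + 1)) * ∑ s ∈ Finset.range (T + 1), Drel E l s ω| ≤ 1 := by
    rw [abs_mul, abs_of_nonneg (by positivity : (0:ℝ) ≤ 1 / ((T : ℝ) + 1))]
    calc (1 / ((T : ℝ) + 1)) * |∑ s ∈ Finset.range (T + 1), Drel E l s ω|
        ≤ (1 / ((T : ℝ) + 1)) * ((T : ℝ) + 1) := by gcongr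
      _ = 1 := by field_simp
  have hD : |(1 / ((T : ℝ) + 1)) * ∑ s ∈ Finset.range (T + 1), ∫ ω', Drel E l s ω' ∂μ| ≤ 1 := by
    rw [abs_mul, abs_of_nonneg (by positivity : (0:ℝ) ≤ 1 / ((T : ℝ) + 1))]
    calc (1 / ((T : ℝ) + 1)) * |∑ s ∈ Finset.range (T + 1), ∫ ω', Drel E l s ω' ∂μ|
        ≤ (1 / ((T : ℝ) + 1)) * ((T : ℝ) + 1) := by gcongr
      _ = 1 := by field_simp
  unfold ddotRel
  obtain ⟨a1, a2⟩ := abs_le.mp hA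
  obtain ⟨b1, b2⟩ := abs_le.mp hB
  obtain ⟨c1, c2⟩ := abs_le.mp hC
  obtain ⟨d1, d2⟩ := abs_le.mp hD
  rw [abs_le]; constructor <;> linarith

lemma integrable_ddot (hE : Measurable E) (T : ℕ) (l : ℤ) (t : ℕ) :
    Integrable (ddotRel μ T E l t) μ :=
  ⟨(measurable_ddot μ hE T l t).aestronglyMeasurable,
    HasFiniteIntegral.of_bounded (C := 4)
      (Filter.Eventually.of_forall fun ω => by
        simpa [Real.norm_eq_abs] using abs_ddot_le μ hE T l t ω)⟩

lemma integral_ddot_zero (hE : Measurable E) (T : ℕ) (l : ℤ) (t : ℕ) :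
    ∫ ω, ddotRel μ T E l t ω ∂μ = 0 := by
  have hD := integrable_Drel μ hE l t
  have hS : Integrable
      (fun ω => (1 / ((T : ℝ) + 1)) * ∑ s ∈ Finset.range (T + 1), Drel E l s ω) μ :=
    (integrable_finset_sum _ fun s _ => integrable_Drel μ hE l s).const_mul _
  unfold ddotRel
  set c : ℝ := ∫ ω', Drel E l t ω' ∂μ with hcdef
  set k : ℝ := (1 / ((T : ℝ) + 1)) * ∑ s ∈ Finset.range (T + 1), ∫ ω', Drel E l s ω' ∂μ
    with hkdef
  have hf1 : Integrable (fun ω => Drel E l t ω - c) μ := hD.sub (integrable_const _)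
  have hf2 : Integrable
      (fun ω => Drel E l t ω - c
        - (1 / ((T : ℝ) + 1)) * ∑ s ∈ Finset.range (T + 1), Drel E l s ω) μ := hf1.sub hS
  rw [integral_add hf2 (integrable_const _), integral_sub hf1 hS, integral_sub hD
    (integrable_const _), integral_const, integral_const,
    integral_const_mul, integral_finset_sum _ fun s _ => integrable_Drel μ hE l s]
  simp [hcdef, hkdef]

lemma sum_ddot_zero (T : ℕ) (l : ℤ) (ω : Ω) :
    ∑ t ∈ Finset.range (T + 1), ddotRel μ T E l t ω = 0 := by
  have hne : ((T : ℝ) + 1) ≠ 0 := by positivity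
  unfold ddotRel
  rw [Finset.sum_add_distrib, Finset.sum_sub_distrib, Finset.sum_sub_distrib,
    Finset.sum_const, Finset.sum_const, Finset.card_range, nsmul_eq_mul, nsmul_eq_mul]
  push_cast
  field_simp
  ring

lemma sum_int_ddot_mul_Drel (hE : Measurable E) (T : ℕ) (l l' : ℤ) :
    ∑ t ∈ Finset.range (T + 1), ∫ ω, ddotRel μ T E l t ω * Drel E l' t ω ∂μ
      = ∑ t ∈ Finset.range (T + 1), ∫ ω, ddotRel μ T E l t ω * ddotRel μ T E l' t ω ∂μ := by
  set g : Ω → ℝ := fun ω => (1 / ((T : ℝ) + 1)) * ∑ s ∈ Finset.range (T + 1), Drel E l' s ω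
    with hg
  have hbdd : ∀ t : ℕ, ∃ C, ∀ ω, ‖ddotRel μ T E l t ω‖ ≤ C :=
    fun t => ⟨4, fun ω => by simpa [Real.norm_eq_abs] using abs_ddot_le μ hE T l t ω⟩
  have hgint : Integrable g μ :=
    (integrable_finset_sum _ fun s _ => integrable_Drel μ hE l' s).const_mul _
  have hddg : ∀ t : ℕ, Integrable (fun ω => ddotRel μ T E l t ω * g ω) μ := fun t =>
    hgint.bdd_mul (measurable_ddot μ hE T l t).aestronglyMeasurable
      (Filter.Eventually.of_forall (hbdd t).choose_spec)
  have hper : ∀ t : ℕ,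
      ∫ ω, ddotRel μ T E l t ω * Drel E l' t ω ∂μ
        = (∫ ω, ddotRel μ T E l t ω * ddotRel μ T E l' t ω ∂μ)
          + ∫ ω, ddotRel μ T E l t ω * g ω ∂μ := by
    intro t
    set c : ℝ := ∫ ω', Drel E l' t ω' ∂μ with hcdef
    set k : ℝ := (1 / ((T : ℝ) + 1)) * ∑ s ∈ Finset.range (T + 1), ∫ ω', Drel E l' s ω' ∂μ
      with hkdef
    have heq : (fun ω => ddotRel μ T E l t ω * Drel E l' t ω)
        = fun ω => ddotRel μ T E l t ω * ddotRel μ T E l' t ω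
            + ddotRel μ T E l t ω * c + ddotRel μ T E l t ω * g ω
            - ddotRel μ T E l t ω * k := by
      funext ω
      have : Drel E l' t ω = ddotRel μ T E l' t ω + c + g ω - k := by
        simp only [ddotRel, hcdef, hkdef, hg]; ring
      rw [this]; ring
    have h1 : Integrable (fun ω => ddotRel μ T E l t ω * ddotRel μ T E l' t ω) μ :=
      (integrable_ddot μ hE T l' t).bdd_mul (measurable_ddot μ hE T l t).aestronglyMeasurable
        (Filter.Eventually.of_forall (hbdd t).choose_spec)
    have h2 : Integrable (fun ω => ddotRel μ T E l t ω * c) μ :=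
      (integrable_ddot μ hE T l t).mul_const _
    have h4 : Integrable (fun ω => ddotRel μ T E l t ω * k) μ :=
      (integrable_ddot μ hE T l t).mul_const _
    have hs2 : Integrable (fun ω => ddotRel μ T E l t ω * ddotRel μ T E l' t ω
        + ddotRel μ T E l t ω * c) μ := h1.add h2
    have hs3 : Integrable (fun ω => ddotRel μ T E l t ω * ddotRel μ T E l' t ω
        + ddotRel μ T E l t ω * c + ddotRel μ T E l t ω * g ω) μ := hs2.add (hddg t)
    rw [heq, integral_sub hs3 h4, integral_add hs2 (hddg t), integral_add h1 h2,
      integral_mul_const, integral_mul_const, integral_ddot_zero μ hE]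
    ring
  have hz : ∑ t ∈ Finset.range (T + 1), ∫ ω, ddotRel μ T E l t ω * g ω ∂μ = 0 := by
    rw [← integral_finset_sum _ fun t _ => hddg t]
    calc ∫ ω, ∑ t ∈ Finset.range (T + 1), ddotRel μ T E l t ω * g ω ∂μ
        = ∫ ω, (0 : ℝ) ∂μ := by
          apply integral_congr_ae
          filter_upwards with ω
          rw [← Finset.sum_mul, sum_ddot_zero μ T l ω, zero_mul]
      _ = 0 := integral_zero _ _
  calc ∑ t ∈ Finset.range (T + 1), ∫ ω, ddotRel μ T E l t ω * Drel E l' t ω ∂μ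
      = ∑ t ∈ Finset.range (T + 1),
          ((∫ ω, ddotRel μ T E l t ω * ddotRel μ T E l' t ω ∂μ)
            + ∫ ω, ddotRel μ T E l t ω * g ω ∂μ) := Finset.sum_congr rfl fun t _ => hper t
    _ = _ := by rw [Finset.sum_add_distrib, hz, add_zero]

end AuxWeights

/-- Weight-sum claims of Proposition 2: summed over cohorts, the own-period weights sum to
one and the other-period weights sum to zero. -/
theorem dynamic_fe_weight_sums
    {Ω : Type*} [MeasurableSpace Ω] (μ : Measure Ω) [IsProbabilityMeasure μ]
    (T : ℕ) (hT : 1 ≤ T)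
    (E : Ω → ℕ) (hE : Measurable E)
    (hsupp : μ {ω | 1 ≤ E ω ∧ E ω ≤ T} = 1)
    (hpos : ∀ e ∈ Finset.Icc 1 T, 0 < μ {ω | E ω = e})
    (L : Finset ℤ) (hL1 : L ⊆ Finset.Icc (-(T : ℤ)) ((T : ℤ) - 1))
    (hL2 : Finset.Icc (0 : ℤ) ((T : ℤ) - 1) ⊆ L)
    (hVD : IsUnit (VD μ T E L).det) :
    ∀ l l' : {x // x ∈ L},
      ∑ e ∈ Finset.Icc 1 T, omegaFE μ T E L l e (l' : ℤ)
        = if (l : ℤ) = (l' : ℤ) then 1 else 0 := by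
  have hae : ∀ᵐ ω ∂μ, 1 ≤ E ω ∧ E ω ≤ T := by
    rw [ae_iff]
    have hmeas : MeasurableSet {ω | 1 ≤ E ω ∧ E ω ≤ T} :=
      hE (show MeasurableSet {n : ℕ | 1 ≤ n ∧ n ≤ T} from trivial)
    have : {a | ¬(1 ≤ E a ∧ E a ≤ T)} = {ω | 1 ≤ E ω ∧ E ω ≤ T}ᶜ := rfl
    rw [this, measure_compl hmeas (measure_ne_top _ _), hsupp, measure_univ, tsub_self]
  have hindm : ∀ e : ℕ, Measurable (fun ω => if E ω = e then (1 : ℝ) else 0) := by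
    intro e
    exact Measurable.ite (hE (show MeasurableSet {n : ℕ | n = e} from trivial))
      measurable_const measurable_const
  intro l l'
  have hc : ∀ j : {x // x ∈ L},
      ∑ e ∈ Finset.Icc 1 T, cvec μ T E L e (l' : ℤ) j = VD μ T E L j l' := by
    intro j
    unfold cvec VD
    rw [Finset.sum_comm]
    have step1 : ∀ t : ℕ,
        ∑ e ∈ Finset.Icc 1 T,
            ∫ ω, ddotRel μ T E j.1 t ω * ((if E ω = e then (1 : ℝ) else 0)
              * Drel E (l' : ℤ) t ω) ∂μ
          = ∫ ω, ddotRel μ T E j.1 t ω * Drel E (l' : ℤ) t ω ∂μ := by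
      intro t
      have hint : ∀ e ∈ Finset.Icc 1 T, Integrable
          (fun ω => ddotRel μ T E j.1 t ω * ((if E ω = e then (1 : ℝ) else 0)
            * Drel E (l' : ℤ) t ω)) μ := by
        intro e _
        have hg : Integrable (fun ω => (if E ω = e then (1 : ℝ) else 0)
            * Drel E (l' : ℤ) t ω) μ :=
          (integrable_Drel μ hE (l' : ℤ) t).bdd_mul (hindm e).aestronglyMeasurable
            (Filter.Eventually.of_forall fun ω =>
              (show ‖(if E ω = e then (1 : ℝ) else 0)‖ ≤ 1 by split <;> simp))
        exact hg.bdd_mul (measurable_ddot μ hE T j.1 t).aestronglyMeasurable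
          (Filter.Eventually.of_forall fun ω => (show ‖ddotRel μ T E j.1 t ω‖ ≤ 4 by
            simpa [Real.norm_eq_abs] using abs_ddot_le μ hE T j.1 t ω))
      rw [← integral_finset_sum _ hint]
      apply integral_congr_ae
      filter_upwards [hae] with ω hω
      have hone : ∑ e ∈ Finset.Icc 1 T, (if E ω = e then (1 : ℝ) else 0) = 1 := by
        rw [Finset.sum_ite_eq]
        simp [Finset.mem_Icc, hω.1, hω.2]
      have h2 : ∀ e : ℕ, ddotRel μ T E j.1 t ω * ((if E ω = e then (1 : ℝ) else 0)
          * Drel E (l' : ℤ) t ω)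
            = (if E ω = e then (1 : ℝ) else 0)
              * (ddotRel μ T E j.1 t ω * Drel E (l' : ℤ) t ω) := fun e => by ring
      rw [Finset.sum_congr rfl fun e _ => h2 e, ← Finset.sum_mul, hone, one_mul]
    rw [Finset.sum_congr rfl fun t _ => step1 t]
    exact sum_int_ddot_mul_Drel μ hE T j.1 (l' : ℤ)
  calc ∑ e ∈ Finset.Icc 1 T, omegaFE μ T E L l e (l' : ℤ)
      = ∑ e ∈ Finset.Icc 1 T, ∑ j : {x // x ∈ L},
          (VD μ T E L)⁻¹ l j * cvec μ T E L e (l' : ℤ) j := by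
        simp [omegaFE, Matrix.mulVec, dotProduct]
    _ = ∑ j : {x // x ∈ L}, (VD μ T E L)⁻¹ l j
          * ∑ e ∈ Finset.Icc 1 T, cvec μ T E L e (l' : ℤ) j := by
        rw [Finset.sum_comm]
        simp [Finset.mul_sum]
    _ = ∑ j : {x // x ∈ L}, (VD μ T E L)⁻¹ l j * VD μ T E L j l' := by
        simp_rw [hc]
    _ = ((VD μ T E L)⁻¹ * VD μ T E L) l l' := (Matrix.mul_apply).symm
    _ = (1 : Matrix {x // x ∈ L} {x // x ∈ L} ℝ) l l' := by
        rw [Matrix.nonsing_inv_mul _ hVD]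
    _ = if (l : ℤ) = (l' : ℤ) then 1 else 0 := by
        rw [Matrix.one_apply]
        exact if_congr Subtype.ext_iff rfl rfl


end
end
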